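/- arXiv:1911.11992 — 7 statements merged into one kernel-verified Lean document; each statement's English description precedes it below -/
import Mathlib

section
/- Let u : ℝ^d → ℂ be a nonzero continuous positive definite function with u(x) → 0 as |x| → ∞. Then for every a ∈ ℝ^d and every sequence (x_n) in ℝ^d, if Re(u(x_n − a)) → Re(u(0)) as n → ∞, then x_n → a. In particular, if a, b ∈ ℝ^d satisfy Re(u(a − b)) = Re(u(0)), then a = b (injectivity of the feature map x ↦ u(· − x), with continuous inverse on its image). -/
open MeasureTheory Filter
open scoped Real ComplexOrder

noncomputable section

namespace Paper

/-- The character `e^{2π i x·ξ}` for `x, ξ ∈ ℝ^d`. -/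
def char {d : ℕ} (x ξ : EuclideanSpace ℝ (Fin d)) : ℂ :=
  Complex.exp (2 * Real.pi * Complex.I * ((∑ j, x j * ξ j : ℝ) : ℂ))

/-- Membership in `L²(û⁻¹)`: measurable, vanishing a.e. on `{û = 0}`, with
`∫ |g|² û⁻¹ < ∞`. -/
def MemL2inv {d : ℕ} (uhat : EuclideanSpace ℝ (Fin d) → ℝ)
    (g : EuclideanSpace ℝ (Fin d) → ℂ) : Prop :=
  Measurable g ∧ (∀ᵐ ξ ∂volume, uhat ξ = 0 → g ξ = 0) ∧
    Integrable (fun ξ => ‖g ξ‖ ^ 2 * (uhat ξ)⁻¹)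

/-- The norm `‖g‖_{L²(û⁻¹)}`. -/
def nrmInv {d : ℕ} (uhat : EuclideanSpace ℝ (Fin d) → ℝ)
    (g : EuclideanSpace ℝ (Fin d) → ℂ) : ℝ :=
  Real.sqrt (∫ ξ, ‖g ξ‖ ^ 2 * (uhat ξ)⁻¹)

/-- `h_g(x) = ∫ g(ξ) e^{2πi x·ξ} dξ`. -/
def hFun {d : ℕ} (g : EuclideanSpace ℝ (Fin d) → ℂ) (x : EuclideanSpace ℝ (Fin d)) : ℂ :=
  ∫ ξ, g ξ * char x ξ

/-- The composition operator `C_f` (for the RKHS associated with `û`) is everywhere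
defined with bound `M`, on the set `S`. -/
def BddCompOp {d : ℕ} (uhat : EuclideanSpace ℝ (Fin d) → ℝ)
    (S : Set (EuclideanSpace ℝ (Fin d)))
    (f : EuclideanSpace ℝ (Fin d) → EuclideanSpace ℝ (Fin d)) (M : ℝ) : Prop :=
  ∀ g, MemL2inv uhat g → ∃ g', MemL2inv uhat g' ∧ (∀ x ∈ S, hFun g' x = hFun g (f x)) ∧
    nrmInv uhat g' ≤ M * nrmInv uhat g

/-- Matrix acting on Euclidean space. -/
def mulVecE {d : ℕ} (A : Matrix (Fin d) (Fin d) ℝ) (x : EuclideanSpace ℝ (Fin d)) :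
    EuclideanSpace ℝ (Fin d) :=
  (EuclideanSpace.equiv (Fin d) ℝ).symm (A.mulVec (EuclideanSpace.equiv (Fin d) ℝ x))

/-- Membership in `G(u)`: invertible `A` with `û(Aᵀ ξ) ≥ λ û(ξ)` a.e. for some `λ > 0`. -/
def memG {d : ℕ} (uhat : EuclideanSpace ℝ (Fin d) → ℝ) (A : Matrix (Fin d) (Fin d) ℝ) : Prop :=
  IsUnit A ∧ ∃ lam > (0:ℝ), ∀ᵐ ξ ∂volume, lam * uhat ξ ≤ uhat (mulVecE A.transpose ξ)

/-- Condition (A): `û` decays faster than every exponential. -/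
def CondA {d : ℕ} (uhat : EuclideanSpace ℝ (Fin d) → ℝ) : Prop :=
  ∀ a > (0:ℝ), ∃ c > (0:ℝ), ∀ᵐ ξ ∂volume, uhat ξ ≤ c * Real.exp (-a * ‖ξ‖)

/-- The norm `‖h‖_{L²(û)}`. -/
def nrmHat {d : ℕ} (uhat : EuclideanSpace ℝ (Fin d) → ℝ)
    (h : EuclideanSpace ℝ (Fin d) → ℂ) : ℝ :=
  Real.sqrt (∫ ξ, ‖h ξ‖ ^ 2 * uhat ξ)

/-- Evaluation of a `d`-variable complex polynomial at a real point. -/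
def evalP {d : ℕ} (P : MvPolynomial (Fin d) ℂ) (ξ : EuclideanSpace ℝ (Fin d)) : ℂ :=
  MvPolynomial.eval (fun j => ((ξ j : ℝ) : ℂ)) P

/-- `(m_z P)(ξ) = e^{-2πi z·ξ} P(ξ)`. -/
def mzP {d : ℕ} (z : Fin d → ℂ) (P : MvPolynomial (Fin d) ℂ)
    (ξ : EuclideanSpace ℝ (Fin d)) : ℂ :=
  Complex.exp (-(2 * Real.pi * Complex.I) * ∑ j, z j * ((ξ j : ℝ) : ℂ)) * evalP P ξ

/-- Condition (B): `sup_z limsup_n (sup ratio)^{1/n} < ∞`. -/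
def CondB {d : ℕ} (uhat : EuclideanSpace ℝ (Fin d) → ℝ) : Prop :=
  ∃ C : ℝ, ∀ z : Fin d → ℂ,
    Filter.limsup (fun n : ℕ =>
      (sSup {r : ℝ | ∃ P : MvPolynomial (Fin d) ℂ, P ≠ 0 ∧ P.totalDegree ≤ n ∧
        r = nrmHat uhat (mzP z P) / nrmHat uhat (evalP P)}) ^ ((n : ℝ)⁻¹))
      Filter.atTop ≤ C

/-- The embedding `ℝ^d ⊆ ℂ^d`. -/
def RtoC {d : ℕ} (x : EuclideanSpace ℝ (Fin d)) : EuclideanSpace ℂ (Fin d) :=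
  WithLp.toLp 2 (fun j => ((x j : ℝ) : ℂ))

/-- The imaginary part `Im z ∈ ℝ^d` of `z ∈ ℂ^d`. -/
def imVec {d : ℕ} (z : EuclideanSpace ℂ (Fin d)) : EuclideanSpace ℝ (Fin d) :=
  WithLp.toLp 2 (fun j => (z j).im)

/-- A function `u : ℝ^d → ℂ` is positive definite. -/
def IsPosDefFn {d : ℕ} (u : EuclideanSpace ℝ (Fin d) → ℂ) : Prop :=
  ∀ (m : ℕ) (p : Fin m → EuclideanSpace ℝ (Fin d)) (c : Fin m → ℂ),
    0 ≤ ∑ i, ∑ j, (starRingEnd ℂ) (c i) * c j * u (p i - p j)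

variable {d : ℕ} {u : EuclideanSpace ℝ (Fin d) → ℂ}

lemma pd_zero (hu : IsPosDefFn u) : 0 ≤ u 0 := by
  have h := hu 1 (fun _ => 0) (fun _ => 1); simpa using h

lemma pd_symm (hu : IsPosDefFn u) (x : EuclideanSpace ℝ (Fin d)) :
    u (-x) = (starRingEnd ℂ) (u x) := by
  have h0 := pd_zero hu
  have him0 : (u 0).im = 0 := (Complex.le_def.mp h0).2.symm
  have h1 := hu 2 ![0, x] ![1, 1]
  have h2 := hu 2 ![0, x] ![1, Complex.I]
  simp [Fin.sum_univ_two, sub_self, zero_sub, sub_zero] at h1 h2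
  have e1 := (Complex.le_def.mp h1).2
  have e2 := (Complex.le_def.mp h2).2
  simp [Complex.add_im, Complex.mul_im, him0] at e1 e2
  apply Complex.ext <;> simp [Complex.conj_re, Complex.conj_im] <;> linarith

lemma two_point (hu : IsPosDefFn u) (x : EuclideanSpace ℝ (Fin d)) (c : ℂ) :
    0 ≤ (1 + Complex.normSq c) * (u 0).re + 2 * (c * (starRingEnd ℂ) (u x)).re := by
  have him0 : (u 0).im = 0 := (Complex.le_def.mp (pd_zero hu)).2.symm
  have h := hu 2 ![0, x] ![1, c]
  simp [Fin.sum_univ_two, sub_self, zero_sub, sub_zero, pd_symm hu] at h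
  have hre := (Complex.le_def.mp h).1
  simp [Complex.add_re, Complex.mul_re, Complex.normSq_apply,
    Complex.conj_re, Complex.conj_im, him0] at hre ⊢
  ring_nf at hre ⊢
  linarith

lemma pd_norm_le (hu : IsPosDefFn u) (x : EuclideanSpace ℝ (Fin d)) :
    ‖u x‖ ≤ (u 0).re := by
  rcases eq_or_ne (u x) 0 with h | h
  · simpa [h] using (Complex.le_def.mp (pd_zero hu)).1
  · have h2 := two_point hu x (-(‖u x‖ : ℂ)⁻¹ * u x)
    have hn : (0:ℝ) < ‖u x‖ := norm_pos_iff.mpr h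
    have e1 : Complex.normSq (-(‖u x‖ : ℂ)⁻¹ * u x) = 1 := by
      simp [Complex.normSq_mul, Complex.normSq_inv, Complex.normSq_eq_norm_sq]
      field_simp
      exact Or.inl trivial
    have e2 : ((-(‖u x‖ : ℂ)⁻¹ * u x) * (starRingEnd ℂ) (u x)).re = -‖u x‖ := by
      have hne : (‖u x‖ : ℂ) ≠ 0 := by exact_mod_cast hn.ne'
      rw [mul_assoc, Complex.mul_conj, Complex.normSq_eq_norm_sq]
      rw [show -(‖u x‖:ℂ)⁻¹ * ((‖u x‖:ℝ)^2 : ℝ) = -(‖u x‖:ℂ) by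
        have h0 : ‖u x‖ ≠ 0 := hn.ne'
        push_cast; field_simp]
      simp
    rw [e1, e2] at h2
    linarith

lemma three_point (hu : IsPosDefFn u) (x y : EuclideanSpace ℝ (Fin d)) (s : ℝ) :
    0 ≤ (s^2 + 2 * Complex.normSq (u x - u y)) * (u 0).re
      - 2*s*Complex.normSq (u x - u y)
      - 2*Complex.normSq (u x - u y) * (u (x - y)).re := by
  have him0 : (u 0).im = 0 := (Complex.le_def.mp (pd_zero hu)).2.symm
  have hyx : u (y - x) = (starRingEnd ℂ) (u (x - y)) := by
    rw [← neg_sub x y, pd_symm hu]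
  have h := hu 3 ![0, x, y] ![(s:ℂ), -(u x - u y), u x - u y]
  simp [Fin.sum_univ_three, sub_self, zero_sub, sub_zero, pd_symm hu, hyx] at h
  have hre := (Complex.le_def.mp h).1
  simp [Complex.add_re, Complex.sub_re, Complex.mul_re, Complex.normSq_apply,
    Complex.conj_re, Complex.conj_im, Complex.sub_im, Complex.add_im, him0] at hre ⊢
  ring_nf at hre ⊢
  linarith

lemma eq_of_re_eq (hu : IsPosDefFn u) (hr : 0 < (u 0).re)
    (x y : EuclideanSpace ℝ (Fin d)) (h : (u (x - y)).re = (u 0).re) : u x = u y := by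
  set n := Complex.normSq (u x - u y) with hn
  have hs : ∀ s : ℝ, 0 ≤ s^2 * (u 0).re - 2*s*n := by
    intro s
    have h3 := three_point hu x y s
    rw [h] at h3
    linarith
  have h2 := hs (n / (u 0).re)
  have hn0 : 0 ≤ n := Complex.normSq_nonneg _
  have hsq : n^2 = 0 := by
    have h2' : 0 ≤ (n^2 / (u 0).re - 2 * (n / (u 0).re) * n) * (u 0).re :=
      mul_nonneg (by
        have e : (n / (u 0).re)^2 * (u 0).re = n^2 / (u 0).re := by field_simp
        rw [e] at h2; exact h2) hr.le
    have e2 : (n^2 / (u 0).re - 2 * (n / (u 0).re) * n) * (u 0).re = -(n^2) := by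
      field_simp; ring
    rw [e2] at h2'
    nlinarith [sq_nonneg n]
  have : n = 0 := by nlinarith [sq_nonneg n, abs_nonneg n, hn0, hsq, sq_abs n]
  have := Complex.normSq_eq_zero.mp this
  exact sub_eq_zero.mp this

lemma zero_of_re_eq (hu : IsPosDefFn u) (hr : 0 < (u 0).re)
    (hu_zero : Tendsto u (cocompact (EuclideanSpace ℝ (Fin d))) (nhds 0))
    (z : EuclideanSpace ℝ (Fin d)) (hz : (u z).re = (u 0).re) : z = 0 := by
  by_contra hz0
  have hper : ∀ x, u (x + z) = u x := by
    intro x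
    have := eq_of_re_eq hu hr (x + z) x (by rwa [add_sub_cancel_left])
    exact this
  have hconst : ∀ n : ℕ, u (n • z) = u 0 := by
    intro n
    induction n with
    | zero => simp
    | succ k ih => rw [succ_nsmul, hper, ih]
  have hnorm : Tendsto (fun n : ℕ => ‖(n : ℕ) • z‖) atTop atTop := by
    have he : ∀ n : ℕ, ‖(n:ℕ) • z‖ = (n:ℝ) * ‖z‖ := by
      intro n
      rw [← Nat.cast_smul_eq_nsmul ℝ, norm_smul, Real.norm_natCast]
    simp only [he]
    exact Tendsto.atTop_mul_const (norm_pos_iff.mpr hz0) tendsto_natCast_atTop_atTop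
  have hcc : Tendsto (fun n : ℕ => (n:ℕ) • z) atTop (cocompact (EuclideanSpace ℝ (Fin d))) := by
    rw [← Metric.cobounded_eq_cocompact]
    exact tendsto_norm_atTop_iff_cobounded.mp hnorm
  have := hu_zero.comp hcc
  simp only [Function.comp_def, hconst] at this
  have : u 0 = 0 := tendsto_nhds_unique tendsto_const_nhds this
  rw [this] at hr
  simp at hr


namespace T
variable {d : ℕ} {u : EuclideanSpace ℝ (Fin d) → ℂ}

lemma r_pos (hu : IsPosDefFn u) (hu_ne : u ≠ 0) : 0 < (u 0).re := by
  obtain ⟨x, hx⟩ := Function.ne_iff.mp hu_ne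
  calc (0:ℝ) < ‖u x‖ := norm_pos_iff.mpr hx
    _ ≤ (u 0).re := pd_norm_le hu x

lemma small (hu : IsPosDefFn u) (hu_cont : Continuous u) (hu_ne : u ≠ 0)
    (hu_zero : Tendsto u (cocompact (EuclideanSpace ℝ (Fin d))) (nhds 0)) :
    ∀ ε > (0:ℝ), ∃ δ > (0:ℝ), ∀ y : EuclideanSpace ℝ (Fin d),
      (u 0).re - δ < (u y).re → ‖y‖ < ε := by
  intro ε hε
  set r := (u 0).re with hrdef
  have hr : 0 < r := r_pos hu hu_ne
  -- radius beyond which ‖u y‖ < r/2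
  have hball : u ⁻¹' Metric.ball 0 (r/2) ∈ cocompact (EuclideanSpace ℝ (Fin d)) :=
    hu_zero (Metric.ball_mem_nhds 0 (half_pos hr))
  obtain ⟨K, hK, hKs⟩ := mem_cocompact.mp hball
  obtain ⟨R, hR⟩ := hK.isBounded.subset_closedBall 0
  have hfar : ∀ y : EuclideanSpace ℝ (Fin d), R < ‖y‖ → (u y).re < r/2 := by
    intro y hy
    have hyK : y ∉ K := by
      intro hyK
      have := hR hyK
      rw [Metric.mem_closedBall, dist_zero_right] at this
      linarith
    have := hKs hyK
    simp only [Set.mem_preimage, Metric.mem_ball, dist_zero_right] at this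
    calc (u y).re ≤ ‖u y‖ := Complex.re_le_norm (u y)
      _ < r/2 := this
  set K' : Set (EuclideanSpace ℝ (Fin d)) :=
    Metric.closedBall 0 (R+1) ∩ {y | ε ≤ ‖y‖} with hK'def
  have hK'cpt : IsCompact K' :=
    (isCompact_closedBall 0 (R+1)).inter_right
      (isClosed_le continuous_const continuous_norm)
  have hnotK' : ∀ y ∈ K', (u y).re < r := by
    intro y hy
    rcases lt_or_eq_of_le (le_trans (Complex.re_le_norm (u y)) (pd_norm_le hu y)) with h | h
    · exact h
    · exfalso
      have hy0 : y = 0 := zero_of_re_eq hu hr hu_zero y h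
      have := hy.2
      rw [hy0] at this
      simp only [Set.mem_setOf_eq, norm_zero] at this
      linarith
  by_cases hne : K'.Nonempty
  · obtain ⟨y0, hy0K, hmax⟩ := hK'cpt.exists_isMaxOn hne
      ((Complex.continuous_re.comp hu_cont).continuousOn)
    refine ⟨min (r - (u y0).re) (r/2), lt_min (by linarith [hnotK' y0 hy0K]) (half_pos hr), ?_⟩
    intro y hy
    by_contra hcon
    push_neg at hcon
    rcases le_or_gt ‖y‖ (R+1) with hle | hlt
    · have hyK' : y ∈ K' := ⟨by rw [Metric.mem_closedBall, dist_zero_right]; exact hle, hcon⟩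
      have h1 := hmax hyK'
      have h2 := min_le_left (r - (u y0).re) (r/2)
      simp only [Set.mem_setOf_eq, Function.comp_apply] at h1
      linarith
    · have := hfar y (by linarith)
      have h2 := min_le_right (r - (u y0).re) (r/2)
      linarith
  · refine ⟨r/2, half_pos hr, ?_⟩
    intro y hy
    by_contra hcon
    push_neg at hcon
    rcases le_or_gt ‖y‖ (R+1) with hle | hlt
    · exact hne ⟨y, ⟨by rw [Metric.mem_closedBall, dist_zero_right]; exact hle, hcon⟩⟩
    · have := hfar y (by linarith)
      linarith
end T


/-- for a nonzero continuous positive definite `u` vanishing at infinity,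
`Re u(xₙ - a) → Re u(0)` forces `xₙ → a`; in particular `Re u(a - b) = Re u(0)`
forces `a = b`. -/
theorem statement3 {d : ℕ} (hd : 1 ≤ d)
    (u : EuclideanSpace ℝ (Fin d) → ℂ)
    (hu_cont : Continuous u) (hu_ne : u ≠ 0) (hu_pd : IsPosDefFn u)
    (hu_zero : Tendsto u (cocompact (EuclideanSpace ℝ (Fin d))) (nhds 0)) :
    (∀ (a : EuclideanSpace ℝ (Fin d)) (x : ℕ → EuclideanSpace ℝ (Fin d)),
      Tendsto (fun n => (u (x n - a)).re) atTop (nhds (u 0).re) →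
      Tendsto x atTop (nhds a)) ∧
    (∀ a b : EuclideanSpace ℝ (Fin d), (u (a - b)).re = (u 0).re → a = b) := by
  have hr : 0 < (u 0).re := T.r_pos hu_pd hu_ne
  constructor
  · intro a x hx
    rw [Metric.tendsto_atTop]
    intro ε hε
    obtain ⟨δ, hδ, hsmall⟩ := T.small hu_pd hu_cont hu_ne hu_zero ε hε
    have hev : ∀ᶠ n in atTop, (u 0).re - δ < (u (x n - a)).re :=
      hx.eventually (eventually_mem_set.mpr (Ioi_mem_nhds (by linarith)))
    obtain ⟨N, hN⟩ := eventually_atTop.mp hev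
    exact ⟨N, fun n hn => by rw [dist_eq_norm]; exact hsmall _ (hN n hn)⟩
  · intro a b hab
    have := zero_of_re_eq hu_pd hr hu_zero (a - b) hab
    exact sub_eq_zero.mp this
end Paper
end
end

section
/- Let a > 0 and c > 0, and let û : ℝ^d → ℝ be measurable with 0 ≤ û(ξ) ≤ c e^{−4πa|ξ|} for a.e. ξ. Let g : ℝ^d → ℂ be measurable with g = 0 a.e. on {û = 0} and ∫ |g(ξ)|² û(ξ)⁻¹ dξ < ∞ (so g is integrable). If ∫ g(ξ) e^{2πi x·ξ} dξ = 0 for every x in some nonempty open set U ⊆ ℝ^d, then g = 0 a.e. (Equivalently, the elements k(·, x) with x ∈ U span a dense subspace of the RKHS H_k: H_{k,U} = H_k.) -/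
open MeasureTheory Filter
open scoped Real ComplexOrder

noncomputable section

namespace Paper

section Aux

open Complex SchwartzMap
open scoped RealInnerProductSpace ContDiff FourierTransform


lemma integrable_exp_neg_norm_aux {d : ℕ} {b : ℝ} (hb : 0 < b) :
    Integrable (fun ξ : EuclideanSpace ℝ (Fin d) => Real.exp (-b * ‖ξ‖)) := by
  have hd : ((Module.finrank ℝ (EuclideanSpace ℝ (Fin d)) : ℝ)) < (d + 1 : ℝ) := by
    rw [finrank_euclideanSpace, Fintype.card_fin]; exact_mod_cast lt_add_one d
  have h := integrable_one_add_norm (E := EuclideanSpace ℝ (Fin d)) (r := (d+1 : ℝ)) (μ := volume) hd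
  set M : ℝ := max 1 ((d+1 : ℝ)/b) with hM
  have hM1 : (1:ℝ) ≤ M := le_max_left _ _
  have hMb : (d+1 : ℝ)/b ≤ M := le_max_right _ _
  refine (h.const_mul (M ^ (d+1))).mono' ?_ ?_
  · exact (Real.continuous_exp.comp (continuous_const.mul continuous_norm)).aestronglyMeasurable
  · refine Filter.Eventually.of_forall fun ξ => ?_
    have hx : (0:ℝ) ≤ ‖ξ‖ := norm_nonneg _
    have key : 1 + ‖ξ‖ ≤ M * Real.exp (b * ‖ξ‖ / (d+1)) := by
      have h1 : 1 + b * ‖ξ‖ / (d+1) ≤ Real.exp (b * ‖ξ‖ / (d+1)) := by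
        have := Real.add_one_le_exp (b * ‖ξ‖ / (d+1)); linarith
      have h2 : M * (1 + b * ‖ξ‖ / (d+1)) ≥ 1 + ‖ξ‖ := by
        have hdb : (0:ℝ) < (d+1:ℝ) := by positivity
        have : ‖ξ‖ ≤ M * (b * ‖ξ‖ / (d+1)) := by
          calc ‖ξ‖ = ((d+1:ℝ)/b) * (b * ‖ξ‖ / (d+1)) := by field_simp
          _ ≤ M * (b * ‖ξ‖ / (d+1)) := by
              apply mul_le_mul_of_nonneg_right hMb; positivity
        nlinarith
      calc 1 + ‖ξ‖ ≤ M * (1 + b * ‖ξ‖ / (d+1)) := h2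
      _ ≤ M * Real.exp (b * ‖ξ‖ / (d+1)) := by nlinarith [Real.exp_pos (b * ‖ξ‖ / (d+1))]
    have hpow : (1 + ‖ξ‖) ^ (d+1 : ℕ) ≤ M ^ (d+1) * Real.exp (b * ‖ξ‖) := by
      calc (1 + ‖ξ‖) ^ (d+1:ℕ) ≤ (M * Real.exp (b * ‖ξ‖ / (d+1))) ^ (d+1:ℕ) :=
        pow_le_pow_left₀ (by positivity) key _
      _ = M ^ (d+1) * Real.exp (b * ‖ξ‖ / (d+1)) ^ (d+1:ℕ) := by rw [mul_pow]
      _ = M ^ (d+1) * Real.exp (b * ‖ξ‖) := by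
          rw [← Real.exp_nat_mul]; congr 1; push_cast; field_simp
    rw [Real.norm_eq_abs, _root_.abs_of_nonneg (Real.exp_pos _).le]
    have hrpow : ((1:ℝ) + ‖ξ‖) ^ (-(d+1:ℝ)) = ((1 + ‖ξ‖) ^ (d+1:ℕ))⁻¹ := by
      rw [Real.rpow_neg (by positivity), ← Real.rpow_natCast]
      norm_num
    rw [hrpow]
    have hexp : Real.exp (-b * ‖ξ‖) = (Real.exp (b * ‖ξ‖))⁻¹ := by
      rw [← Real.exp_neg]; ring_nf
    rw [hexp]
    have hP : (0:ℝ) < (1 + ‖ξ‖) ^ (d+1:ℕ) := by positivity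
    have hE : (0:ℝ) < Real.exp (b * ‖ξ‖) := Real.exp_pos _
    have h3 : (Real.exp (b * ‖ξ‖))⁻¹ * (1 + ‖ξ‖) ^ (d+1:ℕ) ≤ M ^ (d+1) := by
      have h2 := mul_le_mul_of_nonneg_left hpow (by positivity : (0:ℝ) ≤ (Real.exp (b * ‖ξ‖))⁻¹)
      have h4 : (Real.exp (b * ‖ξ‖))⁻¹ * (M ^ (d+1) * Real.exp (b * ‖ξ‖)) = M ^ (d+1) := by
        field_simp
      linarith
    calc (Real.exp (b * ‖ξ‖))⁻¹
        = (Real.exp (b * ‖ξ‖))⁻¹ * (1 + ‖ξ‖) ^ (d+1:ℕ) * ((1 + ‖ξ‖) ^ (d+1:ℕ))⁻¹ := by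
          field_simp
      _ ≤ M ^ (d+1) * ((1 + ‖ξ‖) ^ (d+1:ℕ))⁻¹ :=
          mul_le_mul_of_nonneg_right h3 (by positivity)


lemma integrable_weight {d : ℕ} {a c : ℝ} (ha : 0 < a) (hc : 0 < c)
    {uhat : EuclideanSpace ℝ (Fin d) → ℝ} (huhat_meas : Measurable uhat)
    (huhat_bd : ∀ᵐ ξ ∂volume, 0 ≤ uhat ξ ∧ uhat ξ ≤ c * Real.exp (-(4 * Real.pi * a) * ‖ξ‖))
    {g : EuclideanSpace ℝ (Fin d) → ℂ} (hg : MemL2inv uhat g)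
    {s : ℝ} (hs : s < 2 * Real.pi * a) :
    Integrable (fun ξ => ‖g ξ‖ * Real.exp (s * ‖ξ‖)) := by
  obtain ⟨hmeas, hnull, hint⟩ := hg
  set f₁ : EuclideanSpace ℝ (Fin d) → ℝ := fun ξ => ‖g ξ‖ * Real.sqrt (uhat ξ)⁻¹ with hf₁def
  set f₂ : EuclideanSpace ℝ (Fin d) → ℝ := fun ξ => Real.sqrt (uhat ξ) * Real.exp (s * ‖ξ‖)
    with hf₂def
  have hm1 : Measurable f₁ := (hmeas.norm).mul (huhat_meas.inv.sqrt)
  have hm2 : Measurable f₂ :=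
    (huhat_meas.sqrt).mul (Real.measurable_exp.comp (measurable_norm.const_mul s))
  have hf₁ : MemLp f₁ 2 volume := by
    rw [memLp_two_iff_integrable_sq hm1.aestronglyMeasurable]
    refine hint.congr ?_
    filter_upwards [huhat_bd] with ξ ⟨h0, _⟩
    simp only [hf₁def, mul_pow]
    rw [Real.sq_sqrt (inv_nonneg.2 h0)]
  have hf₂ : MemLp f₂ 2 volume := by
    rw [memLp_two_iff_integrable_sq hm2.aestronglyMeasurable]
    have hb : (0:ℝ) < 4 * Real.pi * a - 2 * s := by
      have := Real.pi_pos; nlinarith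
    refine ((integrable_exp_neg_norm_aux (d := d) hb).const_mul c).mono'
      ((hm2.pow_const 2).aestronglyMeasurable) ?_
    filter_upwards [huhat_bd] with ξ ⟨h0, hle⟩
    rw [Real.norm_eq_abs, _root_.abs_of_nonneg (by positivity)]
    simp only [hf₂def, mul_pow]
    rw [Real.sq_sqrt h0, ← Real.exp_nat_mul]
    calc uhat ξ * Real.exp ((2:ℕ) * (s * ‖ξ‖))
        ≤ (c * Real.exp (-(4 * Real.pi * a) * ‖ξ‖)) * Real.exp ((2:ℕ) * (s * ‖ξ‖)) := by
          apply mul_le_mul_of_nonneg_right hle (Real.exp_pos _).le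
      _ = c * Real.exp (-(4 * Real.pi * a - 2 * s) * ‖ξ‖) := by
          rw [mul_assoc, ← Real.exp_add]; congr 2; push_cast; ring
  -- product of two L² functions is integrable
  have hprod : Integrable (fun ξ => f₁ ξ * f₂ ξ) := by
    have h := L2.integrable_inner (𝕜 := ℝ) (hf₁.toLp f₁) (hf₂.toLp f₂)
    refine h.congr ?_
    filter_upwards [hf₁.coeFn_toLp, hf₂.coeFn_toLp] with ξ h1 h2
    simp [RCLike.inner_apply, h1, h2]
    ring
  refine hprod.congr ?_
  filter_upwards [huhat_bd, hnull] with ξ ⟨h0, _⟩ hnz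
  rcases eq_or_lt_of_le h0 with h|h
  · simp [hf₁def, hnz h.symm]
  · have hne : Real.sqrt (uhat ξ) ≠ 0 := by positivity
    simp only [hf₁def, hf₂def]
    rw [Real.sqrt_inv]
    field_simp


lemma key_vanish {d : ℕ} {a c : ℝ} (ha : 0 < a) (hc : 0 < c)
    {uhat : EuclideanSpace ℝ (Fin d) → ℝ} (huhat_meas : Measurable uhat)
    (huhat_bd : ∀ᵐ ξ ∂volume, 0 ≤ uhat ξ ∧ uhat ξ ≤ c * Real.exp (-(4 * Real.pi * a) * ‖ξ‖))
    {g : EuclideanSpace ℝ (Fin d) → ℂ} (hg : MemL2inv uhat g)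
    {x₀ : EuclideanSpace ℝ (Fin d)} {r : ℝ} (hr : 0 < r)
    (hvanish : ∀ x ∈ Metric.ball x₀ r, (∫ ξ, g ξ * Complex.exp (2 * Real.pi * Complex.I * ((⟪x, ξ⟫ : ℝ) : ℂ))) = 0)
    (y : EuclideanSpace ℝ (Fin d)) :
    (∫ ξ, g ξ * Complex.exp (2 * Real.pi * Complex.I * ((⟪y, ξ⟫ : ℝ) : ℂ))) = 0 := by
  classical
  set v : EuclideanSpace ℝ (Fin d) := y - x₀ with hv
  set bb : EuclideanSpace ℝ (Fin d) → ℝ := fun ξ => ⟪x₀, ξ⟫ with hbb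
  set cc : EuclideanSpace ℝ (Fin d) → ℝ := fun ξ => ⟪v, ξ⟫ with hcc
  have hbbc : Continuous bb := continuous_const.inner continuous_id
  have hccc : Continuous cc := continuous_const.inner continuous_id
  have hccbd : ∀ ξ : EuclideanSpace ℝ (Fin d), |cc ξ| ≤ ‖v‖ * ‖ξ‖ := fun ξ => abs_real_inner_le_norm v ξ
  set F : ℂ → ℂ := fun t => ∫ ξ, g ξ *
    Complex.exp (2 * Real.pi * Complex.I * (bb ξ : ℂ) + t * (2 * Real.pi * Complex.I * (cc ξ : ℂ))) with hF
  set δ : ℝ := a / (‖v‖ + 1) with hδ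
  have hδpos : 0 < δ := by positivity
  set S : Set ℂ := {t : ℂ | |t.im| < δ} with hS
  have hSopen : IsOpen S := isOpen_lt (continuous_abs.comp Complex.continuous_im) continuous_const
  have hSpre : IsPreconnected S := by
    have hconv : Convex ℝ S := by
      have h := (convex_Ioo (-δ) δ).linear_preimage Complex.imLm
      have hSeq : S = Complex.imLm ⁻¹' Set.Ioo (-δ) δ := by
        ext t
        simp [hS, abs_lt, Complex.imLm]
      rw [hSeq]; exact h
    exact hconv.isPreconnected
  -- norm of the exponential factor
  have hnorm_exp : ∀ (t : ℂ) (ξ : EuclideanSpace ℝ (Fin d)),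
      ‖Complex.exp (2 * Real.pi * Complex.I * (bb ξ : ℂ) + t * (2 * Real.pi * Complex.I * (cc ξ : ℂ)))‖
        = Real.exp (-(t.im * (2 * Real.pi * cc ξ))) := by
    intro t ξ
    rw [Complex.norm_exp]
    congr 1
    simp [Complex.add_re, Complex.mul_re, Complex.mul_im]
  have hexp_bd : ∀ (t : ℂ) (ξ : EuclideanSpace ℝ (Fin d)), |t.im| ≤ δ →
      ‖Complex.exp (2 * Real.pi * Complex.I * (bb ξ : ℂ) + t * (2 * Real.pi * Complex.I * (cc ξ : ℂ)))‖
        ≤ Real.exp (2 * Real.pi * δ * ‖v‖ * ‖ξ‖) := by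
    intro t ξ ht
    rw [hnorm_exp]
    apply Real.exp_le_exp.2
    have h1 : -(t.im * (2 * Real.pi * cc ξ)) ≤ |t.im| * (2 * Real.pi * |cc ξ|) := by
      have h2 : |2 * Real.pi * cc ξ| = 2 * Real.pi * |cc ξ| := by
        rw [abs_mul, _root_.abs_of_nonneg (by positivity : (0:ℝ) ≤ 2 * Real.pi)]
      calc -(t.im * (2 * Real.pi * cc ξ)) ≤ |t.im * (2 * Real.pi * cc ξ)| := neg_le_abs _
      _ = |t.im| * |2 * Real.pi * cc ξ| := abs_mul _ _
      _ = |t.im| * (2 * Real.pi * |cc ξ|) := by rw [h2]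
    calc -(t.im * (2 * Real.pi * cc ξ)) ≤ |t.im| * (2 * Real.pi * |cc ξ|) := h1
      _ ≤ δ * (2 * Real.pi * (‖v‖ * ‖ξ‖)) := by
          apply mul_le_mul ht _ (by positivity) hδpos.le
          exact mul_le_mul_of_nonneg_left ((hccbd ξ)) (by positivity)
      _ = 2 * Real.pi * δ * ‖v‖ * ‖ξ‖ := by ring
  have hs₀lt : 2 * Real.pi * δ * ‖v‖ < 2 * Real.pi * a := by
    rw [hδ]
    have h1 : a / (‖v‖ + 1) * ‖v‖ < a := by
      rw [div_mul_eq_mul_div, div_lt_iff₀ (by positivity)]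
      nlinarith [norm_nonneg v]
    nlinarith [Real.pi_pos]
  set s₀ : ℝ := 2 * Real.pi * δ * ‖v‖ with hs₀def
  have hs₀0 : 0 ≤ s₀ := by positivity
  set s₁ : ℝ := (s₀ + 2 * Real.pi * a) / 2 with hs₁def
  have hs₁lt : s₁ < 2 * Real.pi * a := by rw [hs₁def]; linarith
  have hs01 : s₀ < s₁ := by rw [hs₁def]; linarith
  have hint₁ : Integrable (fun ξ : EuclideanSpace ℝ (Fin d) => ‖g ξ‖ * Real.exp (s₁ * ‖ξ‖)) :=
    integrable_weight ha hc huhat_meas huhat_bd hg hs₁lt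
  have hint₀ : Integrable (fun ξ : EuclideanSpace ℝ (Fin d) => ‖g ξ‖ * Real.exp (s₀ * ‖ξ‖)) :=
    integrable_weight ha hc huhat_meas huhat_bd hg hs₀lt
  have hmeas_g : Measurable g := hg.1
  have hcont_arg : ∀ t : ℂ, Continuous (fun ξ : EuclideanSpace ℝ (Fin d) =>
      2 * Real.pi * Complex.I * (bb ξ : ℂ) + t * (2 * Real.pi * Complex.I * (cc ξ : ℂ))) := by
    intro t
    exact (continuous_const.mul (Complex.continuous_ofReal.comp hbbc)).add
      (continuous_const.mul (continuous_const.mul (Complex.continuous_ofReal.comp hccc)))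
  have hmeasF : ∀ t : ℂ, AEStronglyMeasurable
      (fun ξ : EuclideanSpace ℝ (Fin d) => g ξ * Complex.exp (2 * Real.pi * Complex.I * (bb ξ : ℂ) +
        t * (2 * Real.pi * Complex.I * (cc ξ : ℂ)))) volume :=
    fun t => hmeas_g.aestronglyMeasurable.mul
      (Complex.continuous_exp.comp (hcont_arg t)).aestronglyMeasurable
  have hintF : ∀ t : ℂ, |t.im| ≤ δ → Integrable
      (fun ξ : EuclideanSpace ℝ (Fin d) => g ξ * Complex.exp (2 * Real.pi * Complex.I * (bb ξ : ℂ) +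
        t * (2 * Real.pi * Complex.I * (cc ξ : ℂ)))) := by
    intro t ht
    refine hint₀.mono' (hmeasF t) (Eventually.of_forall fun ξ => ?_)
    rw [norm_mul]
    exact mul_le_mul_of_nonneg_left (hexp_bd t ξ ht) (norm_nonneg _)
  -- derivative of the integrand
  set E' : ℂ → EuclideanSpace ℝ (Fin d) → ℂ := fun t ξ => g ξ *
    (Complex.exp (2 * Real.pi * Complex.I * (bb ξ : ℂ) + t * (2 * Real.pi * Complex.I * (cc ξ : ℂ)))
      * (2 * Real.pi * Complex.I * (cc ξ : ℂ))) with hE'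
  have hderiv : ∀ (ξ : EuclideanSpace ℝ (Fin d)) (t : ℂ), HasDerivAt (fun t' : ℂ => g ξ *
      Complex.exp (2 * Real.pi * Complex.I * (bb ξ : ℂ) +
        t' * (2 * Real.pi * Complex.I * (cc ξ : ℂ)))) (E' t ξ) t := by
    intro ξ t
    have h0 : HasDerivAt (fun t' : ℂ => 2 * Real.pi * Complex.I * (bb ξ : ℂ) +
        t' * (2 * Real.pi * Complex.I * (cc ξ : ℂ))) (2 * Real.pi * Complex.I * (cc ξ : ℂ)) t := by
      simpa using ((hasDerivAt_id t).mul_const (2 * Real.pi * Complex.I * (cc ξ : ℂ))).const_add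
        (2 * Real.pi * Complex.I * (bb ξ : ℂ))
    exact h0.cexp.const_mul (g ξ)
  have hnormcc : ∀ ξ : EuclideanSpace ℝ (Fin d), ‖(2 * Real.pi * Complex.I * (cc ξ : ℂ))‖ = 2 * Real.pi * |cc ξ| := by
    intro ξ
    simp only [norm_mul, Complex.norm_I, Complex.norm_real, Complex.norm_ofNat, mul_one,
      Real.norm_eq_abs, map_mul]
    rw [_root_.abs_of_nonneg Real.pi_pos.le]
  set C : ℝ := 2 * Real.pi * ‖v‖ / (s₁ - s₀) with hC
  have hFderiv : ∀ t₀ ∈ S, HasDerivAt F (∫ ξ, E' t₀ ξ) t₀ := by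
    intro t₀ ht₀
    have ht₀' : |t₀.im| < δ := ht₀
    set ε : ℝ := δ - |t₀.im| with hε
    have hεpos : 0 < ε := sub_pos.2 ht₀'
    have hball : ∀ x ∈ Metric.ball t₀ ε, |x.im| ≤ δ := by
      intro x hx
      have h1 : |(x - t₀).im| ≤ ‖x - t₀‖ := Complex.abs_im_le_norm _
      have h2 : ‖x - t₀‖ < ε := by
        rw [← Complex.dist_eq]; exact Metric.mem_ball.1 hx
      have h3 : |x.im| ≤ |(x - t₀).im| + |t₀.im| := by
        rw [Complex.sub_im]
        calc |x.im| = |(x.im - t₀.im) + t₀.im| := by ring_nf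
        _ ≤ |x.im - t₀.im| + |t₀.im| := abs_add_le _ _
      linarith
    refine (hasDerivAt_integral_of_dominated_loc_of_deriv_le (Metric.ball_mem_nhds t₀ hεpos)
      (Eventually.of_forall fun x => hmeasF x) (hintF t₀ ht₀'.le)
      (hmeas_g.aestronglyMeasurable.mul
        (((Complex.continuous_exp.comp (hcont_arg t₀)).mul
          (continuous_const.mul (Complex.continuous_ofReal.comp hccc))).aestronglyMeasurable))
      (Eventually.of_forall fun ξ x hx => ?_)
      (hint₁.const_mul C) (Eventually.of_forall fun ξ x _ => hderiv ξ x)).2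
    -- the bound
    show ‖E' x ξ‖ ≤ C * (‖g ξ‖ * Real.exp (s₁ * ‖ξ‖))
    rw [hE']
    rw [norm_mul, norm_mul, hnormcc]
    have hb1 : ‖Complex.exp (2 * Real.pi * Complex.I * (bb ξ : ℂ) +
        x * (2 * Real.pi * Complex.I * (cc ξ : ℂ)))‖ ≤ Real.exp (s₀ * ‖ξ‖) :=
      hexp_bd x ξ (hball x hx)
    have hb2 : 2 * Real.pi * |cc ξ| ≤ 2 * Real.pi * (‖v‖ * ‖ξ‖) :=
      mul_le_mul_of_nonneg_left (hccbd ξ) (by positivity)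
    have hb3 : (s₁ - s₀) * ‖ξ‖ ≤ Real.exp ((s₁ - s₀) * ‖ξ‖) := by
      have := Real.add_one_le_exp ((s₁ - s₀) * ‖ξ‖); linarith
    have hb4 : 2 * Real.pi * (‖v‖ * ‖ξ‖) ≤ C * Real.exp ((s₁ - s₀) * ‖ξ‖) := by
      rw [hC]
      rw [div_mul_eq_mul_div, le_div_iff₀ (by linarith : (0:ℝ) < s₁ - s₀)]
      calc 2 * Real.pi * (‖v‖ * ‖ξ‖) * (s₁ - s₀) = (2 * Real.pi * ‖v‖) * ((s₁ - s₀) * ‖ξ‖) := by ring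
      _ ≤ (2 * Real.pi * ‖v‖) * Real.exp ((s₁ - s₀) * ‖ξ‖) := by
          exact mul_le_mul_of_nonneg_left hb3 (by positivity)
      _ = 2 * Real.pi * ‖v‖ * Real.exp ((s₁ - s₀) * ‖ξ‖) := by ring
    calc ‖g ξ‖ * (‖Complex.exp (2 * Real.pi * Complex.I * (bb ξ : ℂ) +
          x * (2 * Real.pi * Complex.I * (cc ξ : ℂ)))‖ * (2 * Real.pi * |cc ξ|))
        ≤ ‖g ξ‖ * (Real.exp (s₀ * ‖ξ‖) * (C * Real.exp ((s₁ - s₀) * ‖ξ‖))) := by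
          apply mul_le_mul_of_nonneg_left _ (norm_nonneg _)
          apply mul_le_mul hb1 (hb2.trans hb4) (by positivity) (Real.exp_pos _).le
      _ = C * (‖g ξ‖ * Real.exp (s₁ * ‖ξ‖)) := by
          rw [show s₁ * ‖ξ‖ = s₀ * ‖ξ‖ + (s₁ - s₀) * ‖ξ‖ by ring, Real.exp_add]
          ring
  have hFdiff : DifferentiableOn ℂ F S := fun t ht =>
    ((hFderiv t ht).differentiableAt).differentiableWithinAt
  have hFanal := hFdiff.analyticOnNhd hSopen
  -- F vanishes at small positive real arguments
  set ε₀ : ℝ := r / (‖v‖ + 1) with hε₀def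
  have hε₀pos : 0 < ε₀ := by positivity
  have hexp_arg : ∀ (t : ℝ) (ξ : EuclideanSpace ℝ (Fin d)),
      2 * Real.pi * Complex.I * (bb ξ : ℂ) + (t : ℂ) * (2 * Real.pi * Complex.I * (cc ξ : ℂ)) =
        2 * Real.pi * Complex.I * ((⟪x₀ + t • v, ξ⟫ : ℝ) : ℂ) := by
    intro t ξ
    have h1 : (⟪x₀ + t • v, ξ⟫ : ℝ) = bb ξ + t * cc ξ := by
      rw [hbb, hcc]
      simp [inner_add_left, real_inner_smul_left, Finset.mul_sum, mul_assoc]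
    rw [h1]
    push_cast
    ring
  have hzero : ∀ t : ℝ, |t| < ε₀ → F (t : ℂ) = 0 := by
    intro t ht
    have hmem : x₀ + t • v ∈ Metric.ball x₀ r := by
      rw [Metric.mem_ball, dist_eq_norm]
      have : x₀ + t • v - x₀ = t • v := by abel
      rw [this, norm_smul, Real.norm_eq_abs]
      calc |t| * ‖v‖ ≤ |t| * (‖v‖ + 1) := by
            apply mul_le_mul_of_nonneg_left (by linarith) (abs_nonneg t)
      _ < ε₀ * (‖v‖ + 1) := by
            apply mul_lt_mul_of_pos_right ht (by positivity)
      _ = r := by rw [hε₀def]; field_simp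
    have hv0 := hvanish _ hmem
    rw [hF]
    rw [← hv0]
    apply integral_congr_ae
    refine Eventually.of_forall fun ξ => ?_
    dsimp only
    rw [hexp_arg t ξ]
  have h0S : (0 : ℂ) ∈ S := by
    simp only [hS, Set.mem_setOf_eq, Complex.zero_im, abs_zero]
    exact hδpos
  have hfreq : ∃ᶠ z in nhdsWithin 0 {(0 : ℂ)}ᶜ, F z = 0 := by
    have htend0 : Tendsto (fun n : ℕ => (ε₀ / (n + 2) : ℝ)) atTop (nhds 0) := by
      have h := (tendsto_const_div_atTop_nhds_zero_nat ε₀).comp (tendsto_add_atTop_nat 2)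
      refine h.congr fun n => ?_
      simp [Function.comp]
    have htend : Tendsto (fun n : ℕ => ((ε₀ / (n + 2) : ℝ) : ℂ)) atTop
        (nhdsWithin 0 {(0 : ℂ)}ᶜ) := by
      apply tendsto_nhdsWithin_of_tendsto_nhds_of_eventually_within
      · have h2 := (Complex.continuous_ofReal.tendsto (0 : ℝ)).comp htend0
        rw [Complex.ofReal_zero] at h2
        exact h2
      · refine Eventually.of_forall fun n => ?_
        simp only [Set.mem_compl_iff, Set.mem_singleton_iff]
        intro hcon
        have : (ε₀ / (n + 2) : ℝ) = 0 := by exact_mod_cast hcon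
        have hpos : (0:ℝ) < ε₀ / (n + 2) := by positivity
        linarith
    apply htend.frequently
    apply Frequently.of_forall
    intro n
    apply hzero
    have hpos : (0:ℝ) < ε₀ / (n + 2) := by positivity
    rw [_root_.abs_of_pos hpos]
    rw [div_lt_iff₀ (by positivity : (0:ℝ) < (n:ℝ) + 2)]
    nlinarith [Nat.cast_nonneg (α := ℝ) n]
  have hEq := hFanal.eqOn_zero_of_preconnected_of_frequently_eq_zero hSpre h0S hfreq
  have h1S : (1 : ℂ) ∈ S := by
    simp only [hS, Set.mem_setOf_eq, Complex.one_im, abs_zero]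
    exact hδpos
  have hF1 : F 1 = 0 := hEq h1S
  rw [hF] at hF1
  rw [← hF1]
  have hy : x₀ + (1:ℝ) • v = y := by rw [one_smul, hv]; abel
  apply integral_congr_ae
  refine Eventually.of_forall fun ξ => ?_
  dsimp only
  have h1 := hexp_arg 1 ξ
  rw [Complex.ofReal_one, hy] at h1
  rw [h1]


lemma exists_schwartz {d : ℕ} (φ : EuclideanSpace ℝ (Fin d) → ℝ)
    (h1 : ContDiff ℝ ∞ φ) (h2 : HasCompactSupport φ) :
    ∃ Φ : SchwartzMap (EuclideanSpace ℝ (Fin d)) ℂ, ∀ ξ, Φ ξ = (φ ξ : ℂ) := by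
  have hsm : ContDiff ℝ ∞ fun ξ : EuclideanSpace ℝ (Fin d) => (φ ξ : ℂ) :=
    Complex.ofRealCLM.contDiff.comp h1
  refine ⟨⟨fun ξ => (φ ξ : ℂ), hsm, ?_⟩, fun ξ => rfl⟩
  intro k n
  have hcs : HasCompactSupport fun ξ : EuclideanSpace ℝ (Fin d) => (φ ξ : ℂ) :=
    h2.comp_left Complex.ofReal_zero
  have hcs' := hcs.iteratedFDeriv (𝕜 := ℝ) n
  have hcont : Continuous (iteratedFDeriv ℝ n fun ξ : EuclideanSpace ℝ (Fin d) => (φ ξ : ℂ)) :=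
    hsm.continuous_iteratedFDeriv (ENat.natCast_le_of_coe_top_le_withTop le_rfl n)
  have hfun : HasCompactSupport (fun ξ : EuclideanSpace ℝ (Fin d) =>
      ‖ξ‖ ^ k * ‖iteratedFDeriv ℝ n (fun ξ : EuclideanSpace ℝ (Fin d) => (φ ξ : ℂ)) ξ‖) :=
    (hcs'.norm).mul_left
  obtain ⟨C, hC⟩ :=
    ((continuous_norm.pow k).mul hcont.norm).bounded_above_of_compact_support hfun
  exact ⟨C, fun x => by simpa [Real.norm_eq_abs, _root_.abs_of_nonneg (by positivity : (0:ℝ) ≤ ‖x‖ ^ k * ‖iteratedFDeriv ℝ n (fun ξ : EuclideanSpace ℝ (Fin d) => (φ ξ : ℂ)) x‖)] using hC x⟩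


lemma final_step {d : ℕ} {g : EuclideanSpace ℝ (Fin d) → ℂ} (hgm : Measurable g)
    (hg_int : Integrable g)
    (hall : ∀ x : EuclideanSpace ℝ (Fin d),
      (∫ ξ, g ξ * Complex.exp (2 * Real.pi * Complex.I * ((⟪x, ξ⟫ : ℝ) : ℂ))) = 0) :
    g =ᵐ[volume] 0 := by
  have hall' : ∀ x : EuclideanSpace ℝ (Fin d),
      (∫ ξ, g ξ * Complex.exp (((2 * Real.pi * ⟪x, ξ⟫ : ℝ) : ℂ) * Complex.I)) = 0 := by
    intro x
    rw [← hall x]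
    apply integral_congr_ae
    refine Eventually.of_forall fun ξ => ?_
    dsimp only
    congr 1
    push_cast
    ring
  apply ae_eq_zero_of_integral_contDiff_smul_eq_zero hg_int.locallyIntegrable
  intro φ hφ1 hφ2
  obtain ⟨Φ, hΦ⟩ := exists_schwartz φ hφ1 hφ2
  set ψ : SchwartzMap (EuclideanSpace ℝ (Fin d)) ℂ := FourierTransform.fourierCLE ℂ _ Φ with hψ
  have hinv : ∀ ξ, Φ ξ = 𝓕⁻ (⇑ψ) ξ := by
    intro ξ
    have h := (FourierTransform.fourierCLE ℂ _).symm_apply_apply Φ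
    rw [← hψ] at h  -- maybe not needed
    calc Φ ξ = ((FourierTransform.fourierCLE ℂ _).symm ψ) ξ := by rw [hψ, (FourierTransform.fourierCLE ℂ _).symm_apply_apply]
    _ = 𝓕⁻ (⇑ψ) ξ := by rw [FourierTransform.fourierCLE_symm_apply, SchwartzMap.fourierInv_coe]
  have hrep : ∀ ξ, (φ ξ : ℂ) = ∫ x, Complex.exp (((2 * Real.pi * ⟪x, ξ⟫ : ℝ) : ℂ) * Complex.I) * ψ x := by
    intro ξ
    rw [← hΦ ξ, hinv ξ, Real.fourierInv_eq']
    simp [smul_eq_mul]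
  -- Fubini
  have hintH : Integrable (fun p : (EuclideanSpace ℝ (Fin d)) × (EuclideanSpace ℝ (Fin d)) =>
      Complex.exp (((2 * Real.pi * ⟪p.2, p.1⟫ : ℝ) : ℂ) * Complex.I) * ψ p.2 * g p.1)
      (volume.prod volume) := by
    have hb : Integrable (fun p : (EuclideanSpace ℝ (Fin d)) × (EuclideanSpace ℝ (Fin d)) =>
        ‖g p.1‖ * ‖ψ p.2‖) (volume.prod volume) :=
      hg_int.norm.mul_prod ψ.integrable.norm
    refine hb.mono' ?_ (Eventually.of_forall fun p => ?_)
    · refine (AEStronglyMeasurable.mul (AEStronglyMeasurable.mul ?_ ?_) ?_)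
      · apply Continuous.aestronglyMeasurable
        exact Complex.continuous_exp.comp
          ((Complex.continuous_ofReal.comp
            (continuous_const.mul (continuous_snd.inner continuous_fst))).mul continuous_const)
      · exact (ψ.continuous.comp continuous_snd).aestronglyMeasurable
      · exact (hgm.comp measurable_fst).aestronglyMeasurable
    · rw [norm_mul, norm_mul, Complex.norm_exp_ofReal_mul_I, one_mul]
      exact le_of_eq (mul_comm _ _)
  have hswap := integral_integral_swap (μ := (volume : Measure (EuclideanSpace ℝ (Fin d))))
    (ν := (volume : Measure (EuclideanSpace ℝ (Fin d))))
    (f := fun ξ x => Complex.exp (((2 * Real.pi * ⟪x, ξ⟫ : ℝ) : ℂ) * Complex.I) * ψ x * g ξ)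
    hintH
  calc ∫ ξ, φ ξ • g ξ
      = ∫ ξ, (φ ξ : ℂ) * g ξ := by
        refine integral_congr_ae (Eventually.of_forall fun ξ => ?_)
        simp [Complex.real_smul]
    _ = ∫ ξ, (∫ x, Complex.exp (((2 * Real.pi * ⟪x, ξ⟫ : ℝ) : ℂ) * Complex.I) * ψ x) * g ξ := by
        refine integral_congr_ae (Eventually.of_forall fun ξ => ?_)
        dsimp only
        rw [← hrep ξ]
    _ = ∫ ξ, ∫ x, Complex.exp (((2 * Real.pi * ⟪x, ξ⟫ : ℝ) : ℂ) * Complex.I) * ψ x * g ξ := by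
        refine integral_congr_ae (Eventually.of_forall fun ξ => ?_)
        dsimp only
        exact (integral_mul_const _ _).symm
    _ = ∫ x, ∫ ξ, Complex.exp (((2 * Real.pi * ⟪x, ξ⟫ : ℝ) : ℂ) * Complex.I) * ψ x * g ξ := hswap
    _ = ∫ x : EuclideanSpace ℝ (Fin d), ψ x *
          ∫ ξ, g ξ * Complex.exp (((2 * Real.pi * ⟪x, ξ⟫ : ℝ) : ℂ) * Complex.I) := by
        refine integral_congr_ae (Eventually.of_forall fun x => ?_)
        dsimp only
        rw [← integral_const_mul]
        refine integral_congr_ae (Eventually.of_forall fun ξ => ?_)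
        dsimp only
        ring
    _ = 0 := by
        have : ∀ x : EuclideanSpace ℝ (Fin d), ψ x *
            (∫ ξ, g ξ * Complex.exp (((2 * Real.pi * ⟪x, ξ⟫ : ℝ) : ℂ) * Complex.I)) = 0 := by
          intro x
          rw [hall' x, mul_zero]
        simp only [this, integral_zero]

end Aux

/-- if `û` decays like `c e^{-4πa|ξ|}`, `g ∈ L²(û⁻¹)` and the inverse
Fourier transform of `g` vanishes on a nonempty open set `U`, then `g = 0` a.e. -/
theorem statement5 {d : ℕ} (hd : 1 ≤ d) (a c : ℝ) (ha : 0 < a) (hc : 0 < c)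
    (uhat : EuclideanSpace ℝ (Fin d) → ℝ) (huhat_meas : Measurable uhat)
    (huhat_bd : ∀ᵐ ξ ∂volume, 0 ≤ uhat ξ ∧ uhat ξ ≤ c * Real.exp (-(4 * Real.pi * a) * ‖ξ‖))
    (g : EuclideanSpace ℝ (Fin d) → ℂ) (hg : MemL2inv uhat g)
    (U : Set (EuclideanSpace ℝ (Fin d))) (hU : U.Nonempty) (hUo : IsOpen U)
    (hvanish : ∀ x ∈ U, (∫ ξ, g ξ * char x ξ) = 0) :
    g =ᵐ[volume] 0 := by
  obtain ⟨x₀, hx₀⟩ := hU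
  obtain ⟨r, hrpos, hball⟩ := Metric.isOpen_iff.1 hUo x₀ hx₀
  have hsum : ∀ w ξ : EuclideanSpace ℝ (Fin d),
      (inner ℝ w ξ : ℝ) = ∑ j, w j * ξ j := by
    intro w ξ
    simp [PiLp.inner_apply, RCLike.inner_apply, conj_trivial]
    exact Finset.sum_congr rfl fun j _ => mul_comm _ _
  have hvanish' : ∀ x ∈ Metric.ball x₀ r,
      (∫ ξ, g ξ * Complex.exp (2 * Real.pi * Complex.I * ((inner ℝ x ξ : ℝ) : ℂ))) = 0 := by
    intro x hx
    rw [← hvanish x (hball hx)]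
    refine integral_congr_ae (Filter.Eventually.of_forall fun ξ => ?_)
    dsimp only [char]
    rw [hsum x ξ]
  have hall := fun y => key_vanish ha hc huhat_meas huhat_bd hg hrpos hvanish' y
  have hg_int : Integrable g := by
    have h0 : (0:ℝ) < 2 * Real.pi * a := by positivity
    have h := integrable_weight ha hc huhat_meas huhat_bd hg (s := 0) h0
    have h' : Integrable (fun ξ => ‖g ξ‖) := by
      refine h.congr (Filter.Eventually.of_forall fun ξ => ?_)
      simp
    exact (integrable_norm_iff hg.1.aestronglyMeasurable).1 h'
  exact final_step hg.1 hg_int hall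

end Paper
end
end

section
/- Let a > 0 and c > 0, and let û : ℝ^d → ℝ be measurable with 0 ≤ û(ξ) ≤ c e^{−4πa|ξ|} for a.e. ξ. Let μ_û be Lebesgue measure with density û. Then for every z ∈ ℂ^d with |Im z| < a, the function e_z : ξ ↦ e^{−2πi z·ξ} (with z·ξ = Σ_j z_j ξ_j) lies in L²(μ_û); the map Φ from the open set {z ∈ ℂ^d : |Im z| < a} to L²(μ_û) sending z to the class of e_z is holomorphic (ℂ-differentiable as a map into the complex Banach space L²(μ_û)); and for each j = 1, …, d, the partial derivative of Φ with respect to z_j at z is the class of ξ ↦ −2πi ξ_j e^{−2πi z·ξ}. -/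
open MeasureTheory Filter
open scoped Real ComplexOrder

noncomputable section

namespace Paper

/-- `e_z(ξ) = e^{-2πi z·ξ}` for `z ∈ ℂ^d`, `ξ ∈ ℝ^d`. -/
def eC {d : ℕ} (z : EuclideanSpace ℂ (Fin d)) (ξ : EuclideanSpace ℝ (Fin d)) : ℂ :=
  Complex.exp (-(2 * Real.pi * Complex.I) * ∑ j, z j * ((ξ j : ℝ) : ℂ))

open scoped ENNReal

lemma abs_coord_le {d : ℕ} (ξ : EuclideanSpace ℝ (Fin d)) (j : Fin d) : |ξ j| ≤ ‖ξ‖ := by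
  rw [EuclideanSpace.norm_eq]
  have h : |ξ j| = Real.sqrt (‖ξ j‖ ^ 2) := by
    rw [Real.sqrt_sq_eq_abs, abs_norm, Real.norm_eq_abs]
  rw [h]
  exact Real.sqrt_le_sqrt (Finset.single_le_sum (f := fun i => ‖ξ i‖ ^ 2)
    (fun i _ => sq_nonneg _) (Finset.mem_univ j))

lemma norm_imVec_le {d : ℕ} (z : EuclideanSpace ℂ (Fin d)) : ‖imVec z‖ ≤ ‖z‖ := by
  rw [EuclideanSpace.norm_eq, EuclideanSpace.norm_eq]
  apply Real.sqrt_le_sqrt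
  apply Finset.sum_le_sum
  intro j _
  have h1 : ‖imVec z j‖ = |(z j).im| := Real.norm_eq_abs ((z j).im)
  rw [h1]
  refine pow_le_pow_left₀ (abs_nonneg _) ?_ 2
  exact Complex.abs_im_le_norm (z j)

lemma imVec_add {d : ℕ} (z w : EuclideanSpace ℂ (Fin d)) :
    imVec (z + w) = imVec z + imVec w := by
  ext j
  show ((z + w) j).im = (imVec z + imVec w) j
  rw [PiLp.add_apply, PiLp.add_apply, Complex.add_im]
  rfl

lemma cs_sum {d : ℕ} (h : EuclideanSpace ℂ (Fin d)) (ξ : EuclideanSpace ℝ (Fin d)) :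
    ‖∑ j, h j * ((ξ j : ℝ) : ℂ)‖ ≤ ‖h‖ * ‖ξ‖ := by
  set u : EuclideanSpace ℝ (Fin d) := (WithLp.equiv 2 _).symm fun j => ‖h j‖ with hu
  set v : EuclideanSpace ℝ (Fin d) := (WithLp.equiv 2 _).symm fun j => |ξ j| with hv
  have hun : ‖u‖ = ‖h‖ := by
    rw [EuclideanSpace.norm_eq, EuclideanSpace.norm_eq]
    congr 1
    refine Finset.sum_congr rfl fun j _ => ?_
    rw [hu, WithLp.equiv_symm_apply, PiLp.toLp_apply, norm_norm]
  have hvn : ‖v‖ = ‖ξ‖ := by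
    rw [EuclideanSpace.norm_eq, EuclideanSpace.norm_eq]
    congr 1
    refine Finset.sum_congr rfl fun j _ => ?_
    rw [hv, WithLp.equiv_symm_apply, PiLp.toLp_apply, Real.norm_eq_abs, abs_abs, Real.norm_eq_abs]
  calc ‖∑ j, h j * ((ξ j : ℝ) : ℂ)‖ ≤ ∑ j, ‖h j * ((ξ j : ℝ) : ℂ)‖ := norm_sum_le _ _
    _ = ∑ j, ‖h j‖ * |ξ j| := by
        refine Finset.sum_congr rfl fun j _ => ?_
        rw [norm_mul, Complex.norm_real, Real.norm_eq_abs]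
    _ = inner ℝ u v := by
        rw [PiLp.inner_apply]
        refine Finset.sum_congr rfl fun j _ => ?_
        rw [hu, hv, WithLp.equiv_symm_apply, PiLp.toLp_apply, PiLp.toLp_apply]
        simp [RCLike.inner_apply, mul_comm]
    _ ≤ ‖u‖ * ‖v‖ := real_inner_le_norm u v
    _ = ‖h‖ * ‖ξ‖ := by rw [hun, hvn]

lemma norm_eC {d : ℕ} (z : EuclideanSpace ℂ (Fin d)) (ξ : EuclideanSpace ℝ (Fin d)) :
    ‖eC z ξ‖ = Real.exp (2 * π * ∑ j, (z j).im * ξ j) := by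
  rw [eC, Complex.norm_exp]
  congr 1
  have hS : (∑ j, z j * ((ξ j : ℝ) : ℂ)).im = ∑ j, (z j).im * ξ j := by
    rw [Complex.im_sum]
    refine Finset.sum_congr rfl fun j _ => ?_
    simp [Complex.mul_im]
  have : (-(2 * (Real.pi : ℂ) * Complex.I) * ∑ j, z j * ((ξ j : ℝ) : ℂ)).re
      = 2 * π * (∑ j, z j * ((ξ j : ℝ) : ℂ)).im := by
    simp [Complex.mul_re, Complex.mul_im]
  rw [this, hS]

lemma norm_eC_le {d : ℕ} (z : EuclideanSpace ℂ (Fin d)) (ξ : EuclideanSpace ℝ (Fin d)) :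
    ‖eC z ξ‖ ≤ Real.exp (2 * π * ‖imVec z‖ * ‖ξ‖) := by
  rw [norm_eC]
  apply Real.exp_le_exp.2
  have h : ∑ j, (z j).im * ξ j ≤ ‖imVec z‖ * ‖ξ‖ := by
    have h2 := real_inner_le_norm (imVec z) ξ
    rw [PiLp.inner_apply] at h2
    simpa [RCLike.inner_apply, imVec, mul_comm] using h2
  nlinarith [Real.pi_pos]

lemma exp_taylor (w : ℂ) :
    ‖Complex.exp w - 1 - w‖ ≤ 3 * ‖w‖ ^ 2 * Real.exp ‖w‖ := by
  rcases le_total ‖w‖ 1 with h | h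
  · have h1 := Complex.norm_exp_sub_one_sub_id_le (x := w) h
    have h2 : (1 : ℝ) ≤ Real.exp ‖w‖ := Real.one_le_exp (norm_nonneg _)
    nlinarith [sq_nonneg ‖w‖]
  · have h1 : ‖Complex.exp w - 1 - w‖ ≤ ‖Complex.exp w‖ + 1 + ‖w‖ := by
      calc ‖Complex.exp w - 1 - w‖ ≤ ‖Complex.exp w - 1‖ + ‖w‖ := norm_sub_le _ _
        _ ≤ ‖Complex.exp w‖ + ‖(1 : ℂ)‖ + ‖w‖ := by
            have := norm_sub_le (Complex.exp w) (1 : ℂ); linarith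
        _ = ‖Complex.exp w‖ + 1 + ‖w‖ := by norm_num
    have h2 : ‖Complex.exp w‖ ≤ Real.exp ‖w‖ := by
      rw [Complex.norm_exp]
      exact Real.exp_le_exp.2 ((Complex.re_le_norm w).trans_eq rfl)
    have h3 : (1 : ℝ) ≤ Real.exp ‖w‖ := Real.one_le_exp (norm_nonneg _)
    have h4 : ‖w‖ ≤ Real.exp ‖w‖ := by linarith [Real.add_one_le_exp ‖w‖]
    have h5 : 1 ≤ ‖w‖ ^ 2 := by nlinarith
    nlinarith [mul_le_mul_of_nonneg_right h5 (Real.exp_pos ‖w‖).le]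

lemma integrable_pow_exp {d : ℕ} (k : ℕ) (b : ℝ) (hb : 0 < b) :
    Integrable (fun ξ : EuclideanSpace ℝ (Fin d) => ‖ξ‖ ^ k * Real.exp (-(b * ‖ξ‖))) := by
  have hd : (Module.finrank ℝ (EuclideanSpace ℝ (Fin d)) : ℝ) < ((d + 1 : ℕ) : ℝ) := by
    simp [finrank_euclideanSpace]
  set m := k + (d + 1) with hm
  set C := (2 : ℝ) ^ m * (1 + (m.factorial : ℝ) / b ^ m) with hC
  have hCfac : (0 : ℝ) ≤ (m.factorial : ℝ) / b ^ m := by positivity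
  refine ((integrable_one_add_norm (μ := volume) hd).const_mul C).mono'
    ?_ (Eventually.of_forall fun ξ => ?_)
  · exact ((continuous_norm.pow k).mul
      (Real.continuous_exp.comp (continuous_const.mul continuous_norm).neg)).aestronglyMeasurable
  · set t := ‖ξ‖ with htdef
    have ht : 0 ≤ t := norm_nonneg _
    rw [Real.norm_eq_abs, abs_of_nonneg (by positivity)]
    have h1 : (1 + t) ^ (-((d + 1 : ℕ) : ℝ)) = ((1 + t) ^ (d + 1 : ℕ))⁻¹ := by
      rw [Real.rpow_neg (by positivity), Real.rpow_natCast]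
    rw [h1, ← div_eq_mul_inv, le_div_iff₀ (by positivity)]
    have key1 : t ^ k * (1 + t) ^ (d + 1) ≤ (1 + t) ^ m := by
      calc t ^ k * (1 + t) ^ (d + 1) ≤ (1 + t) ^ k * (1 + t) ^ (d + 1) := by
            exact mul_le_mul_of_nonneg_right (pow_le_pow_left₀ ht (by linarith) k)
              (by positivity)
        _ = (1 + t) ^ m := by rw [← pow_add]
    have hexpnn : (0:ℝ) < Real.exp (-(b * t)) := Real.exp_pos _
    have key2 : (1 + t) ^ m * Real.exp (-(b * t)) ≤ C := by
      rcases le_total t 1 with h | h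
      · have e1 : (1 + t) ^ m ≤ 2 ^ m := pow_le_pow_left₀ (by linarith) (by linarith) m
        have e2 : Real.exp (-(b * t)) ≤ 1 := Real.exp_le_one_iff.2 (by nlinarith)
        calc (1 + t) ^ m * Real.exp (-(b * t)) ≤ 2 ^ m * 1 :=
              mul_le_mul e1 e2 hexpnn.le (by positivity)
          _ ≤ C := by rw [hC]; nlinarith [pow_pos (show (0:ℝ) < 2 by norm_num) m]
      · have hbm : (0:ℝ) < b ^ m := pow_pos hb m
        have h4 : b ^ m * t ^ m ≤ (m.factorial : ℝ) * Real.exp (b * t) := by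
          have h5 := Real.pow_div_factorial_le_exp (b * t) (by positivity) m
          rw [div_le_iff₀ (by positivity : (0:ℝ) < (m.factorial : ℝ)), mul_pow] at h5
          linarith [h5]
        have h3 : t ^ m * Real.exp (-(b * t)) ≤ (m.factorial : ℝ) / b ^ m := by
          rw [Real.exp_neg, ← div_eq_mul_inv, div_le_div_iff₀ (Real.exp_pos _) hbm]
          calc t ^ m * b ^ m = b ^ m * t ^ m := mul_comm _ _
            _ ≤ (m.factorial : ℝ) * Real.exp (b * t) := h4
        calc (1 + t) ^ m * Real.exp (-(b * t))
            ≤ (2 * t) ^ m * Real.exp (-(b * t)) := by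
              exact mul_le_mul_of_nonneg_right (pow_le_pow_left₀ (by linarith) (by linarith) m)
                hexpnn.le
          _ = 2 ^ m * (t ^ m * Real.exp (-(b * t))) := by rw [mul_pow]; ring
          _ ≤ 2 ^ m * ((m.factorial : ℝ) / b ^ m) :=
              mul_le_mul_of_nonneg_left h3 (by positivity)
          _ ≤ C := by rw [hC]; nlinarith [pow_pos (show (0:ℝ) < 2 by norm_num) m]
    calc t ^ k * Real.exp (-(b * t)) * (1 + t) ^ (d + 1)
        = t ^ k * (1 + t) ^ (d + 1) * Real.exp (-(b * t)) := by ring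
      _ ≤ (1 + t) ^ m * Real.exp (-(b * t)) :=
          mul_le_mul_of_nonneg_right key1 hexpnn.le
      _ ≤ C := key2

lemma eLpNorm_key {d : ℕ} {a c : ℝ} (ha : 0 < a) (hc : 0 < c)
    {uhat : EuclideanSpace ℝ (Fin d) → ℝ} (huhat_meas : Measurable uhat)
    (huhat_bd : ∀ᵐ ξ ∂volume, 0 ≤ uhat ξ ∧ uhat ξ ≤ c * Real.exp (-(4 * Real.pi * a) * ‖ξ‖))
    (k : ℕ) (t : ℝ) (ht : t < a) :
    ∃ K : ℝ≥0∞, K ≠ ⊤ ∧ ∀ (g : EuclideanSpace ℝ (Fin d) → ℂ) (M : ℝ), 0 ≤ M →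
      (∀ ξ, ‖g ξ‖ ≤ M * (‖ξ‖ ^ k * Real.exp (2 * π * t * ‖ξ‖))) →
      eLpNorm g 2 (volume.withDensity fun ξ => ENNReal.ofReal (uhat ξ)) ≤ ENNReal.ofReal M * K := by
  set μ := volume.withDensity fun ξ => ENNReal.ofReal (uhat ξ) with hμ
  set G : EuclideanSpace ℝ (Fin d) → ℝ := fun ξ => ‖ξ‖ ^ k * Real.exp (2 * π * t * ‖ξ‖) with hG
  have hGcont : Continuous G :=
    (continuous_norm.pow k).mul (Real.continuous_exp.comp (continuous_const.mul continuous_norm))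
  have hGnn : ∀ ξ, 0 ≤ G ξ := fun ξ => by positivity
  refine ⟨eLpNorm G 2 μ, ?_, ?_⟩
  · rw [← lt_top_iff_ne_top,
      eLpNorm_lt_top_iff_lintegral_rpow_enorm_lt_top two_ne_zero (by norm_num)]
    have hmeas2 : Measurable fun ξ => (‖G ξ‖ₑ) ^ ((2:ℝ≥0∞)).toReal :=
      (hGcont.measurable.enorm).pow_const _
    rw [hμ, lintegral_withDensity_eq_lintegral_mul volume (huhat_meas.ennreal_ofReal) hmeas2]
    set b := 4 * π * (a - t) with hb
    have hbpos : 0 < b := by have := Real.pi_pos; rw [hb]; nlinarith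
    have hint : Integrable
        (fun ξ : EuclideanSpace ℝ (Fin d) => c * (‖ξ‖ ^ (2 * k) * Real.exp (-(b * ‖ξ‖)))) :=
      (integrable_pow_exp (2 * k) b hbpos).const_mul c
    refine lt_of_le_of_lt (lintegral_mono_ae ?_) hint.lintegral_lt_top
    filter_upwards [huhat_bd] with ξ hξ
    obtain ⟨h0, h1⟩ := hξ
    show ENNReal.ofReal (uhat ξ) * (‖G ξ‖ₑ) ^ ((2:ℝ≥0∞)).toReal ≤ _
    have e1 : (‖G ξ‖ₑ) ^ ((2:ℝ≥0∞)).toReal = ENNReal.ofReal (G ξ ^ 2) := by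
      rw [Real.enorm_eq_ofReal (hGnn ξ)]
      rw [show ((2:ℝ≥0∞)).toReal = ((2:ℕ):ℝ) by norm_num]
      rw [ENNReal.ofReal_rpow_of_nonneg (hGnn ξ) (by norm_num), Real.rpow_natCast]
    rw [e1, ← ENNReal.ofReal_mul h0]
    apply ENNReal.ofReal_le_ofReal
    have e2 : uhat ξ * G ξ ^ 2 ≤ (c * Real.exp (-(4 * π * a) * ‖ξ‖)) * G ξ ^ 2 :=
      mul_le_mul_of_nonneg_right h1 (sq_nonneg _)
    refine e2.trans (le_of_eq ?_)
    rw [hG]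
    have e3 : Real.exp (-(4 * π * a) * ‖ξ‖) * (Real.exp (2 * π * t * ‖ξ‖)) ^ 2
        = Real.exp (-(b * ‖ξ‖)) := by
      rw [sq, ← Real.exp_add, ← Real.exp_add, hb]
      congr 1
      ring
    calc c * Real.exp (-(4 * π * a) * ‖ξ‖) * (‖ξ‖ ^ k * Real.exp (2 * π * t * ‖ξ‖)) ^ 2
        = c * ((‖ξ‖ ^ k) ^ 2 *
            (Real.exp (-(4 * π * a) * ‖ξ‖) * (Real.exp (2 * π * t * ‖ξ‖)) ^ 2)) := by ring
      _ = c * (‖ξ‖ ^ (2 * k) * Real.exp (-(b * ‖ξ‖))) := by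
          rw [e3, ← pow_mul, mul_comm k 2]
  · intro g M hM hbd
    calc eLpNorm g 2 μ ≤ eLpNorm (fun ξ => M * G ξ) 2 μ :=
          eLpNorm_mono_ae_real (ae_of_all _ hbd)
      _ = eLpNorm (M • G) 2 μ := rfl
      _ = (‖M‖₊ : ℝ≥0∞) * eLpNorm G 2 μ := eLpNorm_const_smul M G 2 μ
      _ = ENNReal.ofReal M * eLpNorm G 2 μ := by rw [← Real.enorm_eq_ofReal hM]; rfl

def Fz {d : ℕ} (z h : EuclideanSpace ℂ (Fin d)) (ξ : EuclideanSpace ℝ (Fin d)) : ℂ :=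
  (-(2 * Real.pi * Complex.I) * ∑ j, h j * ((ξ j : ℝ) : ℂ)) * eC z ξ

lemma coord_cont {d : ℕ} (j : Fin d) : Continuous fun ξ : EuclideanSpace ℝ (Fin d) => ξ j :=
  (EuclideanSpace.proj j).continuous

lemma eC_cont {d : ℕ} (z : EuclideanSpace ℂ (Fin d)) : Continuous (eC z) := by
  apply Complex.continuous_exp.comp
  exact continuous_const.mul (continuous_finset_sum _ fun j _ =>
    continuous_const.mul (Complex.continuous_ofReal.comp (coord_cont j)))

lemma Fz_cont {d : ℕ} (z h : EuclideanSpace ℂ (Fin d)) : Continuous (Fz z h) := by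
  exact (continuous_const.mul (continuous_finset_sum _ fun j _ =>
    continuous_const.mul (Complex.continuous_ofReal.comp (coord_cont j)))).mul (eC_cont z)

lemma norm_two_pi_I : ‖(2 * (Real.pi : ℂ) * Complex.I)‖ = 2 * π := by
  simp [Complex.norm_real, abs_of_nonneg Real.pi_pos.le]

lemma norm_Fz_le {d : ℕ} (z h : EuclideanSpace ℂ (Fin d)) (ξ : EuclideanSpace ℝ (Fin d)) :
    ‖Fz z h ξ‖ ≤ (2 * π * ‖h‖) * (‖ξ‖ ^ 1 * Real.exp (2 * π * ‖imVec z‖ * ‖ξ‖)) := by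
  rw [Fz, norm_mul, norm_mul, norm_neg, norm_two_pi_I, pow_one]
  have h1 : ‖∑ j, h j * ((ξ j : ℝ) : ℂ)‖ ≤ ‖h‖ * ‖ξ‖ := cs_sum h ξ
  have h2 := norm_eC_le z ξ
  have hπ := Real.pi_pos
  calc 2 * π * ‖∑ j, h j * ((ξ j : ℝ) : ℂ)‖ * ‖eC z ξ‖
      ≤ 2 * π * (‖h‖ * ‖ξ‖) * Real.exp (2 * π * ‖imVec z‖ * ‖ξ‖) := by
        apply mul_le_mul _ h2 (norm_nonneg _) (by positivity)
        nlinarith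
    _ = 2 * π * ‖h‖ * (‖ξ‖ * Real.exp (2 * π * ‖imVec z‖ * ‖ξ‖)) := by ring

lemma eC_factor {d : ℕ} (z h : EuclideanSpace ℂ (Fin d)) (ξ : EuclideanSpace ℝ (Fin d)) :
    eC (z + h) ξ = eC z ξ *
      Complex.exp (-(2 * Real.pi * Complex.I) * ∑ j, h j * ((ξ j : ℝ) : ℂ)) := by
  rw [eC, eC, ← Complex.exp_add]
  congr 1
  have : ∀ j, (z + h) j = z j + h j := fun j => rfl
  simp only [this, add_mul, Finset.sum_add_distrib]
  ring

lemma remainder_bound {d : ℕ} (z h : EuclideanSpace ℂ (Fin d)) (ξ : EuclideanSpace ℝ (Fin d)) :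
    ‖eC (z + h) ξ - eC z ξ - Fz z h ξ‖ ≤
      (12 * π ^ 2 * ‖h‖ ^ 2) * (‖ξ‖ ^ 2 * Real.exp (2 * π * (‖imVec z‖ + ‖h‖) * ‖ξ‖)) := by
  set w : ℂ := -(2 * Real.pi * Complex.I) * ∑ j, h j * ((ξ j : ℝ) : ℂ) with hw
  have hπ := Real.pi_pos
  have hwle : ‖w‖ ≤ 2 * π * (‖h‖ * ‖ξ‖) := by
    rw [hw, norm_mul, norm_neg, norm_two_pi_I]
    have := cs_sum h ξ
    nlinarith
  have hrew : eC (z + h) ξ - eC z ξ - Fz z h ξ = eC z ξ * (Complex.exp w - 1 - w) := by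
    rw [eC_factor, Fz]
    ring
  rw [hrew, norm_mul]
  have h1 : 3 * ‖w‖ ^ 2 * Real.exp ‖w‖
      ≤ 3 * (2 * π * (‖h‖ * ‖ξ‖)) ^ 2 * Real.exp (2 * π * (‖h‖ * ‖ξ‖)) := by
    gcongr
  have h2 : Real.exp (2 * π * ‖imVec z‖ * ‖ξ‖) * Real.exp (2 * π * (‖h‖ * ‖ξ‖))
      = Real.exp (2 * π * (‖imVec z‖ + ‖h‖) * ‖ξ‖) := by
    rw [← Real.exp_add]
    congr 1
    ring
  calc ‖eC z ξ‖ * ‖Complex.exp w - 1 - w‖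
      ≤ Real.exp (2 * π * ‖imVec z‖ * ‖ξ‖) * (3 * ‖w‖ ^ 2 * Real.exp ‖w‖) := by
        apply mul_le_mul (norm_eC_le z ξ) (exp_taylor w) (norm_nonneg _) (by positivity)
    _ ≤ Real.exp (2 * π * ‖imVec z‖ * ‖ξ‖)
          * (3 * (2 * π * (‖h‖ * ‖ξ‖)) ^ 2 * Real.exp (2 * π * (‖h‖ * ‖ξ‖))) := by
        apply mul_le_mul_of_nonneg_left h1 (by positivity)
    _ = (12 * π ^ 2 * ‖h‖ ^ 2) * (‖ξ‖ ^ 2 * Real.exp (2 * π * (‖imVec z‖ + ‖h‖) * ‖ξ‖)) := by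
        rw [← h2]
        ring

lemma memEC {d : ℕ} {a c : ℝ} (ha : 0 < a) (hc : 0 < c)
    {uhat : EuclideanSpace ℝ (Fin d) → ℝ} (huhat_meas : Measurable uhat)
    (huhat_bd : ∀ᵐ ξ ∂volume, 0 ≤ uhat ξ ∧ uhat ξ ≤ c * Real.exp (-(4 * Real.pi * a) * ‖ξ‖))
    (z : EuclideanSpace ℂ (Fin d)) (hz : ‖imVec z‖ < a) :
    MemLp (eC z) 2 (volume.withDensity fun ξ => ENNReal.ofReal (uhat ξ)) := by
  obtain ⟨K, hK, hKb⟩ := eLpNorm_key ha hc huhat_meas huhat_bd 0 ‖imVec z‖ hz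
  refine ⟨(eC_cont z).aestronglyMeasurable.mono_ac
    (withDensity_absolutelyContinuous _ _), ?_⟩
  refine lt_of_le_of_lt (hKb (eC z) 1 one_pos.le fun ξ => ?_) ?_
  · simpa using norm_eC_le z ξ
  · exact ENNReal.mul_lt_top ENNReal.ofReal_lt_top (lt_top_iff_ne_top.2 hK)

lemma memF {d : ℕ} {a c : ℝ} (ha : 0 < a) (hc : 0 < c)
    {uhat : EuclideanSpace ℝ (Fin d) → ℝ} (huhat_meas : Measurable uhat)
    (huhat_bd : ∀ᵐ ξ ∂volume, 0 ≤ uhat ξ ∧ uhat ξ ≤ c * Real.exp (-(4 * Real.pi * a) * ‖ξ‖))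
    (z h : EuclideanSpace ℂ (Fin d)) (hz : ‖imVec z‖ < a) :
    MemLp (Fz z h) 2 (volume.withDensity fun ξ => ENNReal.ofReal (uhat ξ)) := by
  obtain ⟨K, hK, hKb⟩ := eLpNorm_key ha hc huhat_meas huhat_bd 1 ‖imVec z‖ hz
  refine ⟨(Fz_cont z h).aestronglyMeasurable.mono_ac
    (withDensity_absolutelyContinuous _ _), ?_⟩
  refine lt_of_le_of_lt (hKb (Fz z h) (2 * π * ‖h‖) (by positivity)
    fun ξ => norm_Fz_le z h ξ) ?_
  exact ENNReal.mul_lt_top ENNReal.ofReal_lt_top (lt_top_iff_ne_top.2 hK)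

def linL {d : ℕ} {a c : ℝ} (ha : 0 < a) (hc : 0 < c)
    {uhat : EuclideanSpace ℝ (Fin d) → ℝ} (huhat_meas : Measurable uhat)
    (huhat_bd : ∀ᵐ ξ ∂volume, 0 ≤ uhat ξ ∧ uhat ξ ≤ c * Real.exp (-(4 * Real.pi * a) * ‖ξ‖))
    (z : EuclideanSpace ℂ (Fin d)) (hz : ‖imVec z‖ < a) :
    EuclideanSpace ℂ (Fin d) →ₗ[ℂ]
      Lp ℂ 2 (volume.withDensity fun ξ => ENNReal.ofReal (uhat ξ)) where
  toFun h := MemLp.toLp (Fz z h) (memF ha hc huhat_meas huhat_bd z h hz)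
  map_add' h₁ h₂ := by
    rw [← MemLp.toLp_add (memF ha hc huhat_meas huhat_bd z h₁ hz)
      (memF ha hc huhat_meas huhat_bd z h₂ hz)]
    apply MemLp.toLp_congr
    apply ae_of_all
    intro ξ
    show Fz z (h₁ + h₂) ξ = Fz z h₁ ξ + Fz z h₂ ξ
    rw [Fz, Fz, Fz]
    have e : ∀ j, (h₁ + h₂) j = h₁ j + h₂ j := fun j => rfl
    simp only [e, add_mul, Finset.sum_add_distrib]
    ring
  map_smul' r h := by
    simp only [RingHom.id_apply]
    rw [← MemLp.toLp_const_smul r (memF ha hc huhat_meas huhat_bd z h hz)]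
    apply MemLp.toLp_congr
    apply ae_of_all
    intro ξ
    show Fz z (r • h) ξ = r * Fz z h ξ
    rw [Fz, Fz]
    have e : ∀ j, (r • h) j = r * h j := fun j => rfl
    have e2 : ∑ j, r * h j * ((ξ j : ℝ) : ℂ) = r * ∑ j, h j * ((ξ j : ℝ) : ℂ) := by
      rw [Finset.mul_sum]
      exact Finset.sum_congr rfl fun j _ => by ring
    simp only [e, e2]
    ring

set_option maxHeartbeats 2000000 in
/-- on the strip `{|Im z| < a}`, each `e_z` lies in `L²(μ_û)`, the map
`z ↦ [e_z]` is holomorphic into `L²(μ_û)`, and its `j`-th partial derivative at `z`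
is the class of `ξ ↦ -2πi ξ_j e^{-2πi z·ξ}`. -/
theorem statement6 {d : ℕ} (hd : 1 ≤ d) (a c : ℝ) (ha : 0 < a) (hc : 0 < c)
    (uhat : EuclideanSpace ℝ (Fin d) → ℝ) (huhat_meas : Measurable uhat)
    (huhat_bd : ∀ᵐ ξ ∂volume, 0 ≤ uhat ξ ∧ uhat ξ ≤ c * Real.exp (-(4 * Real.pi * a) * ‖ξ‖)) :
    (∀ z : EuclideanSpace ℂ (Fin d), ‖imVec z‖ < a →
      MemLp (eC z) 2 (volume.withDensity fun ξ => ENNReal.ofReal (uhat ξ))) ∧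
    ∃ (Φ : EuclideanSpace ℂ (Fin d) →
        Lp ℂ 2 (volume.withDensity fun ξ => ENNReal.ofReal (uhat ξ)))
      (Φ' : EuclideanSpace ℂ (Fin d) → (EuclideanSpace ℂ (Fin d) →L[ℂ]
        Lp ℂ 2 (volume.withDensity fun ξ => ENNReal.ofReal (uhat ξ)))),
      ∀ z : EuclideanSpace ℂ (Fin d), ‖imVec z‖ < a →
        (⇑(Φ z) =ᵐ[volume.withDensity fun ξ => ENNReal.ofReal (uhat ξ)] eC z) ∧
        HasFDerivAt Φ (Φ' z) z ∧
        ∀ j : Fin d,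
          ⇑(Φ' z (EuclideanSpace.single j 1))
            =ᵐ[volume.withDensity fun ξ => ENNReal.ofReal (uhat ξ)]
          fun ξ => -(2 * Real.pi * Complex.I) * ((ξ j : ℝ) : ℂ) * eC z ξ := by
  refine ⟨memEC ha hc huhat_meas huhat_bd, ?_⟩
  set μ := volume.withDensity fun ξ => ENNReal.ofReal (uhat ξ) with hμdef
  refine ⟨fun w => if hw : ‖imVec w‖ < a then
      MemLp.toLp (eC w) (memEC ha hc huhat_meas huhat_bd w hw) else 0,
    fun w => if hw : ‖imVec w‖ < a then
      LinearMap.toContinuousLinearMap (linL ha hc huhat_meas huhat_bd w hw) else 0,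
    fun z hz => ⟨?_, ?_, ?_⟩⟩
  · beta_reduce
    rw [dif_pos hz]
    exact MemLp.coeFn_toLp _
  · -- HasFDerivAt
    beta_reduce
    rw [dif_pos hz]
    set L := LinearMap.toContinuousLinearMap (linL ha hc huhat_meas huhat_bd z hz) with hLdef
    have hLeq : ∀ h, L h = MemLp.toLp (Fz z h) (memF ha hc huhat_meas huhat_bd z h hz) :=
      fun h => rfl
    have hLcoe : ∀ h, ⇑(L h) =ᵐ[μ] Fz z h := fun h => by
      rw [hLeq h]; exact MemLp.coeFn_toLp _
    set t := ‖imVec z‖ with htdef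
    have ht0 : 0 ≤ t := norm_nonneg _
    have hta : t < a := hz
    set δ := (a - t) / 2 with hδdef
    have hδ : 0 < δ := by rw [hδdef]; linarith
    set t' := (a + t) / 2 with ht'def
    have ht' : t' < a := by rw [ht'def]; linarith
    obtain ⟨K, hK, hKb⟩ := eLpNorm_key ha hc huhat_meas huhat_bd 2 t' ht'
    rw [hasFDerivAt_iff_isLittleO_nhds_zero, Asymptotics.isLittleO_iff]
    intro ε hε
    set Kr := K.toReal with hKrdef
    have hKr : 0 ≤ Kr := ENNReal.toReal_nonneg
    have hCpos : (0:ℝ) < 12 * π ^ 2 := by positivity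
    set r := min δ (ε / (12 * π ^ 2 * Kr + 1)) with hrdef
    have hr : 0 < r := lt_min hδ (div_pos hε (by positivity))
    rw [Metric.eventually_nhds_iff]
    refine ⟨r, hr, fun h hh => ?_⟩
    have hhn : ‖h‖ < r := by rwa [dist_zero_right] at hh
    have hh1 : ‖h‖ ≤ δ := (hhn.trans_le (min_le_left _ _)).le
    have hh2 : ‖h‖ ≤ ε / (12 * π ^ 2 * Kr + 1) :=
      (hhn.trans_le (min_le_right _ _)).le
    have hzh : ‖imVec (z + h)‖ < a := by
      have e1 : ‖imVec (z + h)‖ ≤ ‖imVec z‖ + ‖imVec h‖ := by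
        rw [imVec_add]; exact norm_add_le _ _
      have e2 := norm_imVec_le h
      rw [hδdef] at hh1
      linarith
    have hΦzh : (if hw : ‖imVec (z + h)‖ < a then
        MemLp.toLp (eC (z + h)) (memEC ha hc huhat_meas huhat_bd (z + h) hw) else 0)
        = MemLp.toLp (eC (z + h)) (memEC ha hc huhat_meas huhat_bd (z + h) hzh) :=
      dif_pos hzh
    have hΦz : (if hw : ‖imVec z‖ < a then
        MemLp.toLp (eC z) (memEC ha hc huhat_meas huhat_bd z hw) else 0)
        = MemLp.toLp (eC z) (memEC ha hc huhat_meas huhat_bd z hz) :=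
      dif_pos hz
    rw [hΦzh, hΦz]
    have hA := MemLp.coeFn_toLp (memEC ha hc huhat_meas huhat_bd (z + h) hzh)
    have hB := MemLp.coeFn_toLp (memEC ha hc huhat_meas huhat_bd z hz)
    have hY := hLcoe h
    set A := MemLp.toLp (eC (z + h)) (memEC ha hc huhat_meas huhat_bd (z + h) hzh) with hAdef
    set B := MemLp.toLp (eC z) (memEC ha hc huhat_meas huhat_bd z hz) with hBdef
    have hcoe : ⇑(A - B - L h) =ᵐ[μ] fun ξ => eC (z + h) ξ - eC z ξ - Fz z h ξ := by
      filter_upwards [Lp.coeFn_sub (A - B) (L h), Lp.coeFn_sub A B, hA, hB, hY]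
        with ξ a1 a2 a3 a4 a5
      rw [a1, Pi.sub_apply, a2, Pi.sub_apply, a3, a4, a5]
    have hbound : eLpNorm (fun ξ => eC (z + h) ξ - eC z ξ - Fz z h ξ) 2 μ
        ≤ ENNReal.ofReal (12 * π ^ 2 * ‖h‖ ^ 2) * K := by
      apply hKb _ (12 * π ^ 2 * ‖h‖ ^ 2) (by positivity)
      intro ξ
      refine (remainder_bound z h ξ).trans ?_
      have h5 : ‖imVec z‖ + ‖h‖ ≤ t' := by
        rw [ht'def]; rw [hδdef] at hh1
        have : t = ‖imVec z‖ := htdef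
        linarith
      have harg : 2 * π * (‖imVec z‖ + ‖h‖) * ‖ξ‖ ≤ 2 * π * t' * ‖ξ‖ :=
        mul_le_mul_of_nonneg_right
          (mul_le_mul_of_nonneg_left h5 (by positivity)) (norm_nonneg ξ)
      gcongr
    calc ‖A - B - L h‖ = (eLpNorm (fun ξ => eC (z + h) ξ - eC z ξ - Fz z h ξ) 2 μ).toReal := by
          rw [Lp.norm_def, eLpNorm_congr_ae hcoe]
      _ ≤ (ENNReal.ofReal (12 * π ^ 2 * ‖h‖ ^ 2) * K).toReal := by
          apply ENNReal.toReal_mono _ hbound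
          exact (ENNReal.mul_lt_top ENNReal.ofReal_lt_top (lt_top_iff_ne_top.2 hK)).ne
      _ = 12 * π ^ 2 * ‖h‖ ^ 2 * Kr := by
          rw [ENNReal.toReal_mul, ENNReal.toReal_ofReal (by positivity), hKrdef]
      _ ≤ ε * ‖h‖ := by
          have h2' : ‖h‖ * (12 * π ^ 2 * Kr + 1) ≤ ε := by
            rwa [← le_div_iff₀ (by positivity)]
          nlinarith [mul_le_mul_of_nonneg_right h2' (norm_nonneg h), norm_nonneg h,
            sq_nonneg ‖h‖]
  · -- partial derivatives
    intro j
    beta_reduce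
    rw [dif_pos hz]
    have hLcoe : ⇑(LinearMap.toContinuousLinearMap (linL ha hc huhat_meas huhat_bd z hz)
        (EuclideanSpace.single j 1)) =ᵐ[μ] Fz z (EuclideanSpace.single j 1) := by
      have e : LinearMap.toContinuousLinearMap (linL ha hc huhat_meas huhat_bd z hz)
          (EuclideanSpace.single j 1) = MemLp.toLp (Fz z (EuclideanSpace.single j 1))
          (memF ha hc huhat_meas huhat_bd z (EuclideanSpace.single j 1) hz) := rfl
      rw [e]; exact MemLp.coeFn_toLp _
    refine hLcoe.trans (ae_of_all _ fun ξ => ?_)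
    show (-(2 * (Real.pi : ℂ) * Complex.I)
        * ∑ k, (EuclideanSpace.single j (1:ℂ)) k * ((ξ k : ℝ) : ℂ)) * eC z ξ
      = -(2 * (Real.pi : ℂ) * Complex.I) * ((ξ j : ℝ) : ℂ) * eC z ξ
    have e : ∑ k, (EuclideanSpace.single j (1:ℂ)) k * ((ξ k : ℝ) : ℂ) = ((ξ j : ℝ) : ℂ) := by
      simp [EuclideanSpace.single_apply]
    rw [e]
end Paper
end
end

section
/- Let u satisfy the standing assumptions. Let E ⊆ ℝ^d be any subset and f : E → ℝ^d a map, and suppose there exists M > 0 such that the composition operator C_f is everywhere defined with bound M (with S = E). Then f is continuous on E. -/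
open MeasureTheory Filter
open scoped Real ComplexOrder

noncomputable section

namespace Paper

section Aux

open FourierTransform

variable {d : ℕ}

lemma char_eq_fourierChar (x ξ : EuclideanSpace ℝ (Fin d)) :
    char x ξ = Real.fourierChar (∑ j, x j * ξ j) := by
  rw [Real.fourierChar_apply, char]
  congr 1
  push_cast
  ring

lemma char_norm_one (x ξ : EuclideanSpace ℝ (Fin d)) : ‖char x ξ‖ = 1 := by
  rw [char_eq_fourierChar]
  exact Circle.norm_coe _

lemma char_add (x y ξ : EuclideanSpace ℝ (Fin d)) :
    char (x + y) ξ = char x ξ * char y ξ := by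
  unfold char
  rw [← Complex.exp_add]
  congr 1
  have hs : (∑ j, (x + y) j * ξ j) = (∑ j, x j * ξ j) + ∑ j, y j * ξ j := by
    simp [PiLp.add_apply, add_mul, Finset.sum_add_distrib]
  rw [hs]
  push_cast
  ring

lemma sum_eq_inner (x ξ : EuclideanSpace ℝ (Fin d)) :
    (∑ j, x j * ξ j) = (inner ℝ ξ x : ℝ) := by
  rw [PiLp.inner_apply]
  simp [RCLike.inner_apply, mul_comm]

lemma continuous_char_left (ξ : EuclideanSpace ℝ (Fin d)) :
    Continuous fun x : EuclideanSpace ℝ (Fin d) => char x ξ := by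
  simp only [char_eq_fourierChar, sum_eq_inner]
  exact continuous_subtype_val.comp
    (Real.continuous_fourierChar.comp (continuous_const.inner continuous_id))

lemma continuous_char_right (x : EuclideanSpace ℝ (Fin d)) :
    Continuous fun ξ : EuclideanSpace ℝ (Fin d) => char x ξ := by
  simp only [char_eq_fourierChar, sum_eq_inner]
  exact continuous_subtype_val.comp
    (Real.continuous_fourierChar.comp (continuous_id.inner continuous_const))

lemma hFun_continuous {g : EuclideanSpace ℝ (Fin d) → ℂ}
    (hmeas : Measurable g) (hg : Integrable g) : Continuous (hFun g) := by
  apply continuous_of_dominated (bound := fun ξ => ‖g ξ‖)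
  · intro x
    exact (hmeas.mul (continuous_char_right x).measurable).aestronglyMeasurable
  · intro x
    filter_upwards with ξ
    rw [norm_mul, char_norm_one, mul_one]
  · exact hg.norm
  · filter_upwards with ξ
    exact continuous_const.mul (continuous_char_left ξ)

lemma integrable_of_memL2inv {uhat : EuclideanSpace ℝ (Fin d) → ℝ}
    (huhat_L1 : Integrable uhat) (hpos : ∀ᵐ ξ ∂volume, 0 ≤ uhat ξ)
    {g : EuclideanSpace ℝ (Fin d) → ℂ} (hg : MemL2inv uhat g) : Integrable g := by
  obtain ⟨hmeas, hvan, hint⟩ := hg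
  refine Integrable.mono' ((hint.add huhat_L1).div_const 2)
    hmeas.aestronglyMeasurable ?_
  filter_upwards [hpos, hvan] with ξ h0 hv
  simp only [Pi.add_apply]
  rcases eq_or_lt_of_le h0 with h | h
  · rw [hv h.symm]
    simp [← h]
  · have key : ‖g ξ‖ ^ 2 * (uhat ξ)⁻¹ + uhat ξ - 2 * ‖g ξ‖ =
        (‖g ξ‖ - uhat ξ) ^ 2 / uhat ξ := by
      field_simp
      ring
    have h2 : (0:ℝ) ≤ (‖g ξ‖ - uhat ξ) ^ 2 / uhat ξ :=
      div_nonneg (sq_nonneg _) h.le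
    rw [← key] at h2
    linarith

lemma u_tendsto_cocompact {uhat : EuclideanSpace ℝ (Fin d) → ℝ}
    {u : EuclideanSpace ℝ (Fin d) → ℂ}
    (hu_def : ∀ x, u x = ∫ ξ, (uhat ξ : ℂ) * char x ξ) :
    Tendsto u (Filter.cocompact (EuclideanSpace ℝ (Fin d))) (nhds 0) := by
  have hRL := tendsto_integral_exp_inner_smul_cocompact
    (V := EuclideanSpace ℝ (Fin d)) (f := fun ξ => (uhat ξ : ℂ))
  have hneg : Tendsto (fun w : EuclideanSpace ℝ (Fin d) => -w)
      (Filter.cocompact _) (Filter.cocompact _) :=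
    le_of_eq (Homeomorph.neg (EuclideanSpace ℝ (Fin d))).map_cocompact
  have hcomp := hRL.comp hneg
  refine hcomp.congr fun w => ?_
  simp only [Function.comp_apply]
  rw [hu_def w]
  refine integral_congr_ae (Filter.Eventually.of_forall fun ξ => ?_)
  simp only [Circle.smul_def, smul_eq_mul, inner_neg_right, neg_neg,
    char_eq_fourierChar, sum_eq_inner]
  ring

set_option maxHeartbeats 1000000 in
lemma tendsto_of_u_seq {u : EuclideanSpace ℝ (Fin d) → ℂ}
    (hu_cont : Continuous u) (hu0 : u 0 ≠ 0)
    (huRL : Tendsto u (Filter.cocompact (EuclideanSpace ℝ (Fin d))) (nhds 0))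
    {w : ℕ → EuclideanSpace ℝ (Fin d)} {w₀ : EuclideanSpace ℝ (Fin d)}
    (h : ∀ y, Tendsto (fun n => u (w n - y)) atTop (nhds (u (w₀ - y)))) :
    Tendsto w atTop (nhds w₀) := by
  have hε : (0:ℝ) < ‖u 0‖ / 2 := by
    have : (0:ℝ) < ‖u 0‖ := norm_pos_iff.mpr hu0
    linarith
  obtain ⟨K, hK, hKu⟩ : ∃ K : Set (EuclideanSpace ℝ (Fin d)), IsCompact K ∧
      ∀ x ∈ Kᶜ, ‖u x‖ < ‖u 0‖ / 2 := by
    have hev : ∀ᶠ x in Filter.cocompact (EuclideanSpace ℝ (Fin d)),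
        ‖u x‖ < ‖u 0‖ / 2 := by
      have := Metric.tendsto_nhds.mp huRL (‖u 0‖ / 2) hε
      simpa [dist_zero_right] using this
    exact (Filter.hasBasis_cocompact.eventually_iff).mp hev
  have h0 : Tendsto (fun n => u (w n - w₀)) atTop (nhds (u 0)) := by
    simpa using h w₀
  have hmemK : ∀ᶠ n in atTop, w n - w₀ ∈ K := by
    have hne : ∀ᶠ z in nhds (u 0), ‖u 0‖ / 2 < ‖z‖ :=
      (isOpen_lt continuous_const continuous_norm).eventually_mem
        (by simp only [Set.mem_setOf_eq]; linarith)
    filter_upwards [h0.eventually hne] with n hn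
    by_contra hc
    exact absurd (hKu _ hc) (not_lt.mpr hn.le)
  refine tendsto_of_subseq_tendsto fun ns hns => ?_
  obtain ⟨N, hN⟩ := (hns.eventually hmemK).exists_forall_of_atTop
  obtain ⟨a, -, φ, hφ, hφt⟩ := hK.tendsto_subseq
    (x := fun k => w (ns (k + N)) - w₀) fun k => hN _ (Nat.le_add_left N k)
  have hwt : Tendsto (fun k => w (ns (φ k + N))) atTop (nhds (a + w₀)) := by
    have h2 := hφt.add_const w₀
    simpa [Function.comp] using h2
  have hcomp : Tendsto (fun k => ns (φ k + N)) atTop atTop :=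
    hns.comp (tendsto_atTop_mono (fun k => Nat.le_add_right (φ k) N) hφ.tendsto_atTop)
  have hyu : ∀ y, u (a + w₀ - y) = u (w₀ - y) := fun y =>
    tendsto_nhds_unique
      ((hu_cont.tendsto _).comp (hwt.sub_const y))
      ((h y).comp hcomp)
  have hwe : a + w₀ = w₀ := by
    by_contra hne
    have hc0 : a + w₀ - w₀ ≠ 0 := sub_ne_zero.mpr hne
    set c := a + w₀ - w₀ with hc
    have hper : ∀ z, u (z + c) = u z := by
      intro z
      have h3 := hyu (w₀ - z)
      have h1 : a + w₀ - (w₀ - z) = z + c := by rw [hc]; abel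
      have h2 : w₀ - (w₀ - z) = z := by abel
      rwa [h1, h2] at h3
    have hnc : ∀ n : ℕ, u (n • c) = u 0 := by
      intro n
      induction n with
      | zero => simp
      | succ n ih => rw [succ_nsmul, hper, ih]
    have hcc : Tendsto (fun n : ℕ => n • c) atTop
        (Filter.cocompact (EuclideanSpace ℝ (Fin d))) := by
      rw [Filter.hasBasis_cocompact.tendsto_right_iff]
      intro K' hK'
      obtain ⟨R, hR⟩ := hK'.isBounded.subset_closedBall 0
      have hlim : Tendsto (fun n : ℕ => (n : ℝ) * ‖c‖) atTop atTop :=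
        Tendsto.atTop_mul_const (norm_pos_iff.mpr hc0) tendsto_natCast_atTop_atTop
      filter_upwards [hlim.eventually_gt_atTop R] with n hn
      intro hmem
      have hle : ‖(n • c : EuclideanSpace ℝ (Fin d))‖ ≤ R :=
        mem_closedBall_zero_iff.mp (hR hmem)
      rw [← Nat.cast_smul_eq_nsmul ℝ, norm_smul, Real.norm_natCast] at hle
      linarith
    have hlim0 : Tendsto (fun n : ℕ => u (n • c)) atTop (nhds 0) := huRL.comp hcc
    have hlimc : Tendsto (fun n : ℕ => u (n • c)) atTop (nhds (u 0)) := by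
      simp only [hnc]
      exact tendsto_const_nhds
    exact hu0 (tendsto_nhds_unique hlimc hlim0)
  exact ⟨fun k => φ k + N, hwe ▸ hwt⟩

end Aux

/-- under the standing assumptions, if the composition operator `C_f`
is everywhere defined with a bound, then `f` is continuous on `E`. -/
theorem statement7 {d : ℕ} (hd : 1 ≤ d)
    (uhat : EuclideanSpace ℝ (Fin d) → ℝ) (u : EuclideanSpace ℝ (Fin d) → ℂ)
    (huhat_meas : Measurable uhat) (huhat_L1 : Integrable uhat)
    (huhat_Linf : ∃ C : ℝ, ∀ᵐ ξ ∂volume, |uhat ξ| ≤ C)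
    (huhat_pos : ∀ᵐ ξ ∂volume, 0 ≤ uhat ξ)
    (hu_def : ∀ x, u x = ∫ ξ, (uhat ξ : ℂ) * char x ξ)
    (hu_L2 : MemLp u 2) (hu_ne : u ≠ 0)
    (E : Set (EuclideanSpace ℝ (Fin d)))
    (f : EuclideanSpace ℝ (Fin d) → EuclideanSpace ℝ (Fin d))
    (M : ℝ) (hM : 0 < M) (hbdd : BddCompOp uhat E f M) :
    ContinuousOn f E := by
  classical
  have huC_meas : Measurable fun ξ => ((uhat ξ : ℝ) : ℂ) :=
    Complex.measurable_ofReal.comp huhat_meas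
  have huC_int : Integrable fun ξ => ((uhat ξ : ℝ) : ℂ) := huhat_L1.ofReal
  have hu_eq : u = hFun fun ξ => ((uhat ξ : ℝ) : ℂ) := funext fun x => hu_def x
  have hu_cont : Continuous u := hu_eq ▸ hFun_continuous huC_meas huC_int
  have huRL := u_tendsto_cocompact hu_def
  have hchar0 : ∀ ξ : EuclideanSpace ℝ (Fin d), char 0 ξ = 1 := by
    intro ξ
    unfold char
    norm_num
  have hu0 : u 0 ≠ 0 := by
    intro h0
    have hint0 : ∫ ξ, uhat ξ = 0 := by
      have h1 := hu_def 0
      rw [h0] at h1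
      have h2 : ∫ ξ, ((uhat ξ : ℝ):ℂ) * char 0 ξ = ((∫ ξ, uhat ξ : ℝ) : ℂ) := by
        simp only [hchar0, mul_one]
        exact integral_ofReal
      rw [h2] at h1
      exact_mod_cast h1.symm
    have hzero : uhat =ᵐ[volume] 0 :=
      (integral_eq_zero_iff_of_nonneg_ae huhat_pos huhat_L1).mp hint0
    apply hu_ne
    funext x
    simp only [Pi.zero_apply]
    rw [hu_def x]
    refine integral_eq_zero_of_ae ?_
    filter_upwards [hzero] with ξ hξ
    rw [Pi.zero_apply] at hξ
    simp [hξ]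
  intro x₀ hx₀
  rw [ContinuousWithinAt, tendsto_iff_seq_tendsto]
  intro a ha
  have haE : ∀ᶠ n in atTop, a n ∈ E := ha.eventually eventually_mem_nhdsWithin
  have haX : Tendsto a atTop (nhds x₀) := ha.mono_right nhdsWithin_le_nhds
  apply tendsto_of_u_seq hu_cont hu0 huRL
  intro y
  set g : EuclideanSpace ℝ (Fin d) → ℂ := fun ξ => ((uhat ξ : ℝ):ℂ) * char (-y) ξ
    with hgdef
  have hgmem : MemL2inv uhat g := by
    refine ⟨huC_meas.mul (continuous_char_right (-y)).measurable, ?_, ?_⟩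
    · filter_upwards with ξ h0
      simp [hgdef, h0]
    · refine huhat_L1.congr ?_
      filter_upwards [huhat_pos] with ξ h0
      have hnorm : ‖g ξ‖ = uhat ξ := by
        rw [hgdef]
        simp only [norm_mul, char_norm_one, mul_one, Complex.norm_real]
        exact abs_of_nonneg h0
      rw [hnorm]
      rcases eq_or_lt_of_le h0 with h | h
      · simp [← h]
      · rw [sq, mul_assoc, mul_inv_cancel₀ h.ne', mul_one]
  obtain ⟨g', hg'mem, hg'eq, -⟩ := hbdd g hgmem
  have hg'int : Integrable g' := integrable_of_memL2inv huhat_L1 huhat_pos hg'mem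
  have hg'cont : Continuous (hFun g') := hFun_continuous hg'mem.1 hg'int
  have hval : ∀ x ∈ E, hFun g' x = u (f x - y) := by
    intro x hx
    rw [hg'eq x hx]
    show hFun g (f x) = u (f x - y)
    rw [hu_def (f x - y), hFun]
    refine integral_congr_ae (Filter.Eventually.of_forall fun ξ => ?_)
    rw [hgdef]
    simp only
    rw [show f x - y = f x + (-y) from sub_eq_add_neg _ _, char_add]
    ring
  have hlim : Tendsto (fun n => hFun g' (a n)) atTop (nhds (hFun g' x₀)) :=
    (hg'cont.tendsto x₀).comp haX
  rw [hval x₀ hx₀] at hlim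
  refine Filter.Tendsto.congr' ?_ hlim
  filter_upwards [haE] with n hn
  exact hval (a n) hn
end Paper
end
end

section
/- Let u : ℝ^d → ℂ be a nonzero continuously differentiable function such that u ∈ L² and u(x) → 0 as |x| → ∞. Then the complex linear span of the set of gradients {∇u(a) = (∂₁u(a), …, ∂_d u(a)) : a ∈ ℝ^d} is all of ℂ^d. -/
open MeasureTheory Filter
open scoped Real ComplexOrder

noncomputable section

namespace Paper

/-- Auxiliary: the Cauchy–Riemann-type relation makes the restriction to complex lines
holomorphic. -/
theorem keyCR {d : ℕ} (u : EuclideanSpace ℝ (Fin d) → ℂ)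
    (hu_C1 : ContDiff ℝ 1 u)
    (α β : EuclideanSpace ℝ (Fin d))
    (hrel : ∀ a, fderiv ℝ u a α + Complex.I * fderiv ℝ u a β = 0)
    (a : EuclideanSpace ℝ (Fin d)) :
    Differentiable ℂ (fun w : ℂ => u (a + w.re • α + w.im • β)) := by
  intro w
  set T : ℂ →L[ℝ] EuclideanSpace ℝ (Fin d) :=
    Complex.reCLM.smulRight α + Complex.imCLM.smulRight β with hT
  have hTapp : ∀ z : ℂ, T z = z.re • α + z.im • β := by intro z; simp [hT]
  set p : EuclideanSpace ℝ (Fin d) := a + w.re • α + w.im • β with hp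
  have hdu : HasFDerivAt u (fderiv ℝ u p) p :=
    ((hu_C1.differentiable one_ne_zero) p).hasFDerivAt
  have hinner : HasFDerivAt (fun z : ℂ => a + z.re • α + z.im • β) T w := by
    have : HasFDerivAt (fun z : ℂ => a + T z) T w := (T.hasFDerivAt).const_add a
    apply this.congr_of_eventuallyEq
    filter_upwards with z
    simp [hTapp, add_assoc]
  have hcomp : HasFDerivAt (fun z : ℂ => u (a + z.re • α + z.im • β))
      ((fderiv ℝ u p).comp T) w := by
    have := hdu.comp w hinner
    exact this
  have hDβ : fderiv ℝ u p β = Complex.I * fderiv ℝ u p α := by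
    have h := hrel p
    have h1 : Complex.I * (fderiv ℝ u p α + Complex.I * fderiv ℝ u p β) = 0 := by rw [h]; ring
    rw [mul_add] at h1
    have h2 : Complex.I * Complex.I * fderiv ℝ u p β = - (Complex.I * fderiv ℝ u p α) := by
      ring_nf at h1 ⊢
      linear_combination h1
    rw [Complex.I_mul_I] at h2
    linear_combination -h2
  refine (hasFDerivAt_of_restrictScalars ℝ
    (f' := ContinuousLinearMap.smulRight (1 : ℂ →L[ℂ] ℂ) (fderiv ℝ u p α)) hcomp ?_).differentiableAt
  ext z
  simp only [ContinuousLinearMap.coe_restrictScalars', ContinuousLinearMap.smulRight_apply,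
    ContinuousLinearMap.one_apply, ContinuousLinearMap.coe_comp', Function.comp_apply]
  rw [hTapp, map_add, (fderiv ℝ u p).map_smul, (fderiv ℝ u p).map_smul, hDβ]
  simp [Complex.ext_iff, smul_eq_mul]
  constructor <;> ring

/-- Auxiliary: a `C¹` function vanishing at infinity whose gradient is everywhere
annihilated by a nonzero complex covector is identically zero. -/
theorem keyZero {d : ℕ} (u : EuclideanSpace ℝ (Fin d) → ℂ)
    (hu_C1 : ContDiff ℝ 1 u)
    (hu_zero : Tendsto u (cocompact (EuclideanSpace ℝ (Fin d))) (nhds 0))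
    (α β : EuclideanSpace ℝ (Fin d)) (hne : α ≠ 0 ∨ β ≠ 0)
    (hrel : ∀ a, fderiv ℝ u a α + Complex.I * fderiv ℝ u a β = 0) :
    u = 0 := by
  have hbdd : Bornology.IsBounded (Set.range u) := by
    let f : ZeroAtInftyContinuousMap (EuclideanSpace ℝ (Fin d)) ℂ :=
      ⟨⟨u, hu_C1.continuous⟩, hu_zero⟩
    exact f.isBounded_range
  funext a
  have hg : Differentiable ℂ (fun w : ℂ => u (a + w.re • α + w.im • β)) :=
    keyCR u hu_C1 α β hrel a
  have hgb : Bornology.IsBounded (Set.range (fun w : ℂ => u (a + w.re • α + w.im • β))) :=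
    hbdd.subset (Set.range_comp_subset_range _ u)
  have hconst : ∀ w : ℂ, u (a + w.re • α + w.im • β) = u a := by
    intro w
    have := hg.apply_eq_apply_of_bounded hgb w 0
    simpa using this
  obtain ⟨γ, hγ, hγc⟩ : ∃ γ : EuclideanSpace ℝ (Fin d), γ ≠ 0 ∧
      ∀ s : ℝ, u (a + s • γ) = u a := by
    rcases hne with h | h
    · exact ⟨α, h, fun s => by simpa using hconst (s : ℂ)⟩
    · refine ⟨β, h, fun s => by simpa using hconst (s * Complex.I)⟩
  have hnorm : Tendsto (fun s : ℝ => ‖a + s • γ‖) atTop atTop := by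
    apply tendsto_atTop_mono (f := fun s : ℝ => s * ‖γ‖ - ‖a‖)
    · intro s
      calc s * ‖γ‖ - ‖a‖ ≤ ‖s • γ‖ - ‖a‖ := by
            rw [norm_smul]
            have : s * ‖γ‖ ≤ |s| * ‖γ‖ :=
              mul_le_mul_of_nonneg_right (le_abs_self s) (norm_nonneg _)
            simpa using this
        _ ≤ ‖a + s • γ‖ := by
            have h1 := norm_sub_norm_le (s • γ) (-a)
            simp only [norm_neg, sub_neg_eq_add] at h1
            calc ‖s • γ‖ - ‖a‖ ≤ ‖s • γ + a‖ := h1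
              _ = ‖a + s • γ‖ := by rw [add_comm]
    · have h1 : Tendsto (fun s : ℝ => s * ‖γ‖) atTop atTop :=
        tendsto_id.atTop_mul_const (norm_pos_iff.mpr hγ)
      exact tendsto_atTop_add_const_right _ _ h1
  have hline : Tendsto (fun s : ℝ => a + s • γ) atTop
      (cocompact (EuclideanSpace ℝ (Fin d))) := by
    rw [← Metric.cobounded_eq_cocompact]
    exact tendsto_norm_atTop_iff_cobounded.mp hnorm
  have h0 : Tendsto (fun s : ℝ => u (a + s • γ)) atTop (nhds 0) := hu_zero.comp hline
  have hconst' : Tendsto (fun s : ℝ => u (a + s • γ)) atTop (nhds (u a)) := by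
    simp only [hγc]; exact tendsto_const_nhds
  have := tendsto_nhds_unique hconst' h0
  simpa using this

/-- for a nonzero `C¹` function `u ∈ L²` vanishing at infinity, the
complex span of the gradient vectors `∇u(a)`, `a ∈ ℝ^d`, is all of `ℂ^d`. -/
theorem statement12 {d : ℕ} (hd : 1 ≤ d)
    (u : EuclideanSpace ℝ (Fin d) → ℂ)
    (hu_C1 : ContDiff ℝ 1 u) (hu_ne : u ≠ 0) (hu_L2 : MemLp u 2)
    (hu_zero : Tendsto u (cocompact (EuclideanSpace ℝ (Fin d))) (nhds 0)) :
    Submodule.span ℂ {v : Fin d → ℂ |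
      ∃ a : EuclideanSpace ℝ (Fin d), ∀ i, v i = fderiv ℝ u a (EuclideanSpace.single i 1)} = ⊤ := by
  by_contra hspan
  set S : Set (Fin d → ℂ) := {v : Fin d → ℂ |
    ∃ a : EuclideanSpace ℝ (Fin d), ∀ i, v i = fderiv ℝ u a (EuclideanSpace.single i 1)} with hS
  obtain ⟨φ, hφne, hφbot⟩ := Submodule.exists_dual_map_eq_bot_of_lt_top
    (p := Submodule.span ℂ S) (lt_top_iff_ne_top.mpr hspan) inferInstance
  have hφS : ∀ v ∈ S, φ v = 0 := by
    intro v hv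
    have hmem : φ v ∈ (Submodule.span ℂ S).map φ :=
      ⟨v, Submodule.subset_span hv, rfl⟩
    rw [hφbot] at hmem
    simpa using hmem
  set c : Fin d → ℂ := fun j => φ (fun k => if j = k then 1 else 0) with hc
  have hφapp : ∀ v : Fin d → ℂ, φ v = ∑ j, v j * c j := by
    intro v
    conv_lhs => rw [pi_eq_sum_univ v, map_sum]
    refine Finset.sum_congr rfl fun j _ => ?_
    rw [_root_.map_smul]
    simp [hc, smul_eq_mul]
  have hcne : ∃ j, c j ≠ 0 := by
    by_contra hcz
    push_neg at hcz
    exact hφne (LinearMap.ext fun v => by rw [hφapp]; simp [hcz])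
  set α : EuclideanSpace ℝ (Fin d) := WithLp.toLp 2 (fun j => (c j).re) with hα
  set β : EuclideanSpace ℝ (Fin d) := WithLp.toLp 2 (fun j => (c j).im) with hβ
  have hsum : ∀ x : EuclideanSpace ℝ (Fin d),
      x = ∑ j, x j • EuclideanSpace.single j (1 : ℝ) := by
    intro x
    ext k
    rw [WithLp.ofLp_sum, Finset.sum_apply]
    simp [EuclideanSpace.single_apply]
  have hrel : ∀ a, fderiv ℝ u a α + Complex.I * fderiv ℝ u a β = 0 := by
    intro a
    set D := fderiv ℝ u a with hD
    have hv : (fun i => D (EuclideanSpace.single i 1)) ∈ S := ⟨a, fun i => rfl⟩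
    have h0 : ∑ j, D (EuclideanSpace.single j 1) * c j = 0 := by
      rw [← hφapp]; exact hφS _ hv
    have hDα : D α = ∑ j, α j • D (EuclideanSpace.single j 1) := by
      conv_lhs => rw [hsum α, map_sum]
      exact Finset.sum_congr rfl fun j _ => by rw [_root_.map_smul]
    have hDβ : D β = ∑ j, β j • D (EuclideanSpace.single j 1) := by
      conv_lhs => rw [hsum β, map_sum]
      exact Finset.sum_congr rfl fun j _ => by rw [_root_.map_smul]
    rw [hDα, hDβ, Finset.mul_sum, ← Finset.sum_add_distrib, ← h0]
    refine Finset.sum_congr rfl fun j _ => ?_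
    have hcj : c j = (α j : ℂ) + (β j : ℂ) * Complex.I := (Complex.re_add_im (c j)).symm
    rw [hcj, Complex.real_smul, Complex.real_smul]
    ring
  have hne : α ≠ 0 ∨ β ≠ 0 := by
    obtain ⟨j, hj⟩ := hcne
    by_contra hb
    push_neg at hb
    obtain ⟨hb1, hb2⟩ := hb
    apply hj
    have h1 : α j = 0 := by rw [hb1]; rfl
    have h2 : β j = 0 := by rw [hb2]; rfl
    simp only [hα, hβ] at h1 h2
    rw [← Complex.re_add_im (c j)]
    rw [h1, h2]
    simp
  exact hu_ne (keyZero u hu_C1 hu_zero α β hne hrel)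
end Paper
end
end

section
/- Let U ⊆ ℝ^d be a nonempty open set and X ⊆ ℂ^d a connected open set containing U (via the embedding ℝ^d ⊆ ℂ^d). Let V be a Hausdorff topological vector space over ℂ that is locally convex (as a real topological vector space), and let γ : X → V be weakly holomorphic, i.e. for every continuous ℂ-linear functional λ : V → ℂ the function λ ∘ γ is holomorphic on X. If V₀ ⊆ V is a finite-dimensional ℂ-linear subspace and γ(U) ⊆ V₀, then γ(X) ⊆ V₀. -/
open MeasureTheory Filter
open scoped Real ComplexOrder

noncomputable section

namespace Paper

lemma RtoC_dist {d : ℕ} (x y : EuclideanSpace ℝ (Fin d)) :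
    dist (RtoC x) (RtoC y) = dist x y := by
  rw [EuclideanSpace.dist_eq, EuclideanSpace.dist_eq]
  congr 1
  refine Finset.sum_congr rfl fun j _ => ?_
  simp [RtoC, Complex.dist_eq, Real.dist_eq, ← Complex.ofReal_sub, Complex.norm_real]

/-- Identity theorem: holomorphic on connected open X ⊆ ℂ^d, vanishing on a real
ball, vanishes on X. -/
lemma eq_zero_of_real_zero {d : ℕ} {g : EuclideanSpace ℂ (Fin d) → ℂ}
    {X : Set (EuclideanSpace ℂ (Fin d))} (hXo : IsOpen X) (hXc : IsPreconnected X)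
    (hg : DifferentiableOn ℂ g X) (x₀ : EuclideanSpace ℝ (Fin d)) {r : ℝ} (hr : 0 < r)
    (hball : Metric.ball (RtoC x₀) r ⊆ X)
    (h0 : ∀ y, dist y x₀ < r → g (RtoC y) = 0) :
    Set.EqOn g 0 X := by
  set c : EuclideanSpace ℂ (Fin d) := RtoC x₀ with hc
  -- main induction
  have main : ∀ k : ℕ, ∀ z ∈ Metric.ball c r,
      (∀ j : Fin d, k ≤ (j : ℕ) → (z j).im = 0) → g z = 0 := by
    intro k
    induction k with
    | zero =>
      intro z hz him
      set y : EuclideanSpace ℝ (Fin d) := WithLp.toLp 2 (fun j => (z j).re) with hy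
      have hzy : RtoC y = z := by
        ext j
        apply Complex.ext
        · simp [RtoC, hy]
        · simp [RtoC, hy, him j (Nat.zero_le _)]
      rw [← hzy]
      apply h0
      have : dist (RtoC y) (RtoC x₀) < r := by rw [hzy]; exact hz
      rwa [RtoC_dist] at this
    | succ k ih =>
      intro z hz him
      by_cases hk : k < d
      · -- the real work
        set i : Fin d := ⟨k, hk⟩ with hi
        set e : EuclideanSpace ℂ (Fin d) := EuclideanSpace.single i (1 : ℂ) with he
        set u : ℂ → EuclideanSpace ℂ (Fin d) := fun w => z + (w - z i) • e with hu
        have hu_apply : ∀ (w : ℂ) (j : Fin d), u w j = if j = i then w else z j := by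
          intro w j
          by_cases hji : j = i
          · subst hji; simp [hu, he, EuclideanSpace.single_apply]
          · simp [hu, he, EuclideanSpace.single_apply, hji]
        set D : Set ℂ := u ⁻¹' (Metric.ball c r) with hD
        have hucont : Continuous u := by
          apply continuous_const.add
          exact (continuous_id.sub continuous_const).smul continuous_const
        have hDo : IsOpen D := Metric.isOpen_ball.preimage hucont
        have haff : ∀ (a b : ℝ) (w₁ w₂ : ℂ), a + b = 1 →
            u (a • w₁ + b • w₂) = a • u w₁ + b • u w₂ := by
          intro a b w₁ w₂ hab
          ext j
          simp only [PiLp.add_apply, PiLp.smul_apply]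
          rw [hu_apply, hu_apply, hu_apply]
          by_cases hji : j = i
          · simp [hji]
          · simp only [hji, if_false]
            rw [← add_smul, hab, one_smul]
        have hDconv : Convex ℝ D := by
          intro w₁ h₁ w₂ h₂ a b ha hb hab
          show u (a • w₁ + b • w₂) ∈ Metric.ball c r
          rw [haff a b w₁ w₂ hab]
          exact (convex_ball c r) h₁ h₂ ha hb hab
        have huz : u (z i) = z := by
          ext j
          rw [hu_apply]
          by_cases hji : j = i
          · rw [hji]; simp
          · simp [hji]
        have hziD : z i ∈ D := by
          simp only [hD, Set.mem_preimage, huz]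
          exact hz
        -- F
        set F : ℂ → ℂ := fun w => g (u w) with hF
        have hFd : DifferentiableOn ℂ F D := by
          apply DifferentiableOn.comp (t := X) hg
          · exact (((differentiable_id.sub_const (z i)).smul_const e).const_add z).differentiableOn
          · intro w hw
            exact hball hw
        have hFA : AnalyticOnNhd ℂ F D := hFd.analyticOnNhd hDo
        -- sums
        set s : ℝ := ∑ j ∈ Finset.univ.erase i, dist (z j) (c j) ^ 2 with hs
        have hsum_split : ∀ w : ℂ,
            (∑ j, dist (u w j) (c j) ^ 2) = s + dist w (c i) ^ 2 := by
          intro w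
          rw [hs, ← Finset.sum_erase_add _ _ (Finset.mem_univ i)]
          congr 1
          · refine Finset.sum_congr rfl fun j hj => ?_
            rw [hu_apply]
            simp [Finset.mem_erase.1 hj |>.1]
          · rw [hu_apply]; simp
        have hmem_iff : ∀ w : ℂ, u w ∈ Metric.ball c r ↔ s + dist w (c i) ^ 2 < r ^ 2 := by
          intro w
          rw [Metric.mem_ball, EuclideanSpace.dist_eq, Real.sqrt_lt' hr]
          rw [hsum_split w]
        have hzlt : s + dist (z i) (c i) ^ 2 < r ^ 2 := by
          have := (hmem_iff (z i)).1 (by rw [huz]; exact hz)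
          exact this
        have hslt : s < r ^ 2 := by nlinarith [sq_nonneg (dist (z i) (c i)), dist_nonneg (x := z i) (y := c i)]
        -- zeros of F at real points
        have hci : c i = ((x₀ i : ℝ) : ℂ) := rfl
        have hzero : ∀ t : ℝ, (t - x₀ i) ^ 2 < r ^ 2 - s → F ((t : ℝ) : ℂ) = 0 := by
          intro t ht
          have hdist : dist ((t : ℝ) : ℂ) (c i) ^ 2 < r ^ 2 - s := by
            rw [hci, Complex.dist_eq, ← Complex.ofReal_sub, Complex.norm_real, Real.norm_eq_abs, sq_abs]
            exact ht
          have hmem : u ((t : ℝ) : ℂ) ∈ Metric.ball c r := (hmem_iff _).2 (by linarith)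
          apply ih (u ((t : ℝ) : ℂ)) hmem
          intro j hj
          rw [hu_apply]
          by_cases hji : j = i
          · simp [hji]
          · have : k + 1 ≤ (j : ℕ) := by
              rcases Nat.lt_or_ge (j : ℕ) (k + 1) with h | h
              · exfalso; apply hji; apply Fin.ext
                have : (j : ℕ) = k := le_antisymm (Nat.lt_succ_iff.1 h) hj
                simp [this, hi]
              · exact h
            simp only [hji, if_false]
            exact him j this
        -- w₀ ∈ D
        have hw₀D : ((x₀ i : ℝ) : ℂ) ∈ D := by
          have : u ((x₀ i : ℝ) : ℂ) ∈ Metric.ball c r := by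
            rw [hmem_iff, ← hci]
            simp only [dist_self]
            nlinarith
          exact this
        -- frequently zero
        have hδ : 0 < Real.sqrt (r ^ 2 - s) := Real.sqrt_pos.2 (by linarith)
        set δ := Real.sqrt (r ^ 2 - s) with hδdef
        have freq : ∃ᶠ w in nhdsWithin ((x₀ i : ℝ) : ℂ) {((x₀ i : ℝ) : ℂ)}ᶜ, F w = 0 := by
          rw [(Metric.nhdsWithin_basis_ball.frequently_iff)]
          intro ε hε
          refine ⟨((x₀ i + min ε δ / 2 : ℝ) : ℂ), ⟨?_, ?_⟩, ?_⟩
          · rw [Metric.mem_ball, Complex.dist_eq, ← Complex.ofReal_sub, Complex.norm_real, Real.norm_eq_abs]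
            have h1 : 0 < min ε δ := lt_min hε hδ
            rw [show (x₀ i + min ε δ / 2) - x₀ i = min ε δ / 2 by ring]
            rw [abs_of_pos (by linarith)]
            have := min_le_left ε δ
            linarith
          · simp only [Set.mem_compl_iff, Set.mem_singleton_iff]
            intro hcon
            have : x₀ i + min ε δ / 2 = x₀ i := by exact_mod_cast hcon
            have h1 : 0 < min ε δ := lt_min hε hδ
            linarith
          · apply hzero
            have h1 : 0 < min ε δ := lt_min hε hδ
            have h2 : min ε δ / 2 < δ := by
              have := min_le_right ε δ
              linarith
            rw [show (x₀ i + min ε δ / 2) - x₀ i = min ε δ / 2 by ring]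
            have h3 : (min ε δ / 2) ^ 2 < δ ^ 2 := by nlinarith
            rw [hδdef] at h3
            rw [Real.sq_sqrt (by linarith : (0:ℝ) ≤ r ^ 2 - s)] at h3
            linarith
        have hEq : Set.EqOn F 0 D :=
          hFA.eqOn_zero_of_preconnected_of_frequently_eq_zero hDconv.isPreconnected hw₀D freq
        have := hEq hziD
        rw [hF] at this
        simpa [huz] using this
      · -- k ≥ d: vacuous
        apply ih z hz
        intro j hj
        exfalso
        exact hk (lt_of_le_of_lt hj j.isLt)
  -- line lemma: if g vanishes near a point of a ball contained in X, it vanishes on the ball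
  have hline : ∀ (z : EuclideanSpace ℂ (Fin d)) (ρ : ℝ), 0 < ρ → Metric.ball z ρ ⊆ X →
      ∀ a ∈ Metric.ball z ρ, (∀ᶠ w in nhds a, g w = 0) → ∀ w ∈ Metric.ball z ρ, g w = 0 := by
    intro z ρ hρ hb a ha hev w hw
    obtain ⟨ε, hε, hzero⟩ := Metric.eventually_nhds_iff.1 hev
    by_cases hwa : w = a
    · subst hwa; exact hzero (by simpa using hε)
    set v : EuclideanSpace ℂ (Fin d) := w - a with hv
    have hvne : v ≠ 0 := sub_ne_zero.2 hwa
    have hvpos : 0 < ‖v‖ := norm_pos_iff.2 hvne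
    set L : ℂ → EuclideanSpace ℂ (Fin d) := fun t => a + t • v with hL
    have hLcont : Continuous L := continuous_const.add (continuous_id.smul continuous_const)
    set T : Set ℂ := L ⁻¹' (Metric.ball z ρ) with hT
    have hTo : IsOpen T := Metric.isOpen_ball.preimage hLcont
    have haff : ∀ (α β : ℝ) (t₁ t₂ : ℂ), α + β = 1 →
        L (α • t₁ + β • t₂) = α • L t₁ + β • L t₂ := by
      intro α β t₁ t₂ hab
      have hβ : β = 1 - α := by linarith
      subst hβ
      ext j
      simp only [hL, PiLp.add_apply, PiLp.smul_apply, Complex.real_smul,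
        Complex.ofReal_sub, Complex.ofReal_one, smul_eq_mul]
      ring
    have hTconv : Convex ℝ T := by
      intro t₁ h₁ t₂ h₂ α β hα hβ hab
      show L (α • t₁ + β • t₂) ∈ Metric.ball z ρ
      rw [haff α β t₁ t₂ hab]
      exact (convex_ball z ρ) h₁ h₂ hα hβ hab
    have h0T : (0 : ℂ) ∈ T := by
      have : L 0 ∈ Metric.ball z ρ := by simpa [hL] using ha
      exact this
    have h1T : (1 : ℂ) ∈ T := by
      have : L 1 ∈ Metric.ball z ρ := by simpa [hL, hv] using hw
      exact this
    set φ : ℂ → ℂ := fun t => g (L t) with hφ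
    have hφd : DifferentiableOn ℂ φ T := by
      apply DifferentiableOn.comp (t := X) hg
      · exact (differentiable_id.smul_const v).const_add a |>.differentiableOn
      · intro t ht; exact hb ht
    have hφA : AnalyticOnNhd ℂ φ T := hφd.analyticOnNhd hTo
    have hzeroφ : ∀ t : ℂ, ‖t‖ < ε / ‖v‖ → φ t = 0 := by
      intro t ht
      apply hzero
      have : dist (L t) a = ‖t‖ * ‖v‖ := by
        simp [hL, dist_eq_norm, norm_smul]
      rw [this]
      rw [lt_div_iff₀ hvpos] at ht
      exact ht
    have freq : ∃ᶠ t in nhdsWithin (0 : ℂ) {(0:ℂ)}ᶜ, φ t = 0 := by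
      rw [(Metric.nhdsWithin_basis_ball.frequently_iff)]
      intro ε₂ hε₂
      have hεv : 0 < ε / ‖v‖ := div_pos hε hvpos
      have h1 : 0 < min ε₂ (ε / ‖v‖) := lt_min hε₂ hεv
      refine ⟨((min ε₂ (ε / ‖v‖) / 2 : ℝ) : ℂ), ⟨?_, ?_⟩, ?_⟩
      · rw [Metric.mem_ball, Complex.dist_eq, sub_zero, Complex.norm_real, Real.norm_eq_abs,
          abs_of_pos (by linarith)]
        have := min_le_left ε₂ (ε / ‖v‖)
        linarith
      · simp only [Set.mem_compl_iff, Set.mem_singleton_iff]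
        intro hcon
        have : (min ε₂ (ε / ‖v‖) / 2 : ℝ) = 0 := by exact_mod_cast hcon
        linarith
      · apply hzeroφ
        rw [Complex.norm_real, Real.norm_eq_abs, abs_of_pos (by linarith)]
        have := min_le_right ε₂ (ε / ‖v‖)
        linarith
    have hEq : Set.EqOn φ 0 T :=
      hφA.eqOn_zero_of_preconnected_of_frequently_eq_zero hTconv.isPreconnected h0T freq
    have h1L : L 1 = w := by simp [hL, hv]
    have := hEq h1T
    simpa [hφ, h1L] using this
  -- conclude by connectedness
  set A : Set (EuclideanSpace ℂ (Fin d)) := {x | ∀ᶠ w in nhds x, g w = 0} with hA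
  have hAo : IsOpen A := isOpen_setOf_eventually_nhds
  have hcA : c ∈ A := by
    show ∀ᶠ w in nhds c, g w = 0
    filter_upwards [Metric.ball_mem_nhds c hr] with z hz
    exact main d z hz (fun j hj => absurd hj (Nat.not_le.2 j.isLt))
  have hXA : X ⊆ A := by
    apply hXc.subset_of_closure_inter_subset hAo ⟨c, hball (Metric.mem_ball_self hr), hcA⟩
    rintro x ⟨hxcl, hxX⟩
    obtain ⟨ρ, hρ, hbx⟩ := Metric.isOpen_iff.1 hXo x hxX
    obtain ⟨y, hyA, hyx⟩ := Metric.mem_closure_iff.1 hxcl ρ hρ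
    show ∀ᶠ w in nhds x, g w = 0
    filter_upwards [Metric.ball_mem_nhds x hρ] with w hw
    exact hline x ρ hρ hbx y (by rwa [Metric.mem_ball, dist_comm]) hyA w hw
  intro z hz
  have hz' : ∀ᶠ w in nhds z, g w = 0 := hXA hz
  exact hz'.self_of_nhds

/-- a weakly holomorphic map on a connected open `X ⊆ ℂ^d` whose values
on a nonempty open real set `U ⊆ X ∩ ℝ^d` lie in a finite-dimensional subspace `V₀`
takes all its values on `X` in `V₀`. -/
theorem statement14 {d : ℕ} (hd : 1 ≤ d)
    {V : Type*} [AddCommGroup V] [Module ℂ V] [TopologicalSpace V]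
    [IsTopologicalAddGroup V] [ContinuousSMul ℂ V] [T2Space V]
    [Module ℝ V] [IsScalarTower ℝ ℂ V] [ContinuousSMul ℝ V] [LocallyConvexSpace ℝ V]
    (U : Set (EuclideanSpace ℝ (Fin d))) (hU : U.Nonempty) (hUo : IsOpen U)
    (X : Set (EuclideanSpace ℂ (Fin d))) (hXo : IsOpen X) (hXc : IsConnected X)
    (hUX : ∀ x ∈ U, RtoC x ∈ X)
    (γ : EuclideanSpace ℂ (Fin d) → V)
    (hγ : ∀ lam : V →L[ℂ] ℂ, DifferentiableOn ℂ (fun z => lam (γ z)) X)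
    (V₀ : Submodule ℂ V) (hV₀ : FiniteDimensional ℂ ↥V₀)
    (hγU : ∀ x ∈ U, γ (RtoC x) ∈ V₀) :
    ∀ z ∈ X, γ z ∈ V₀ := by
  intro z hz
  by_contra hcon
  -- V₀ is closed and convex (over ℝ)
  have hclosed : IsClosed (V₀ : Set V) := Submodule.closed_of_finiteDimensional V₀
  have hconv : Convex ℝ (V₀ : Set V) := by
    have := (V₀.restrictScalars ℝ).convex
    simpa using this
  obtain ⟨f, u, hfu, hux⟩ :=
    RCLike.geometric_hahn_banach_closed_point (𝕜 := ℂ) hconv hclosed hcon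
  simp only [RCLike.re_to_complex] at hfu hux
  -- f vanishes on V₀
  have hf0 : ∀ v ∈ V₀, f v = 0 := by
    intro v hv
    by_contra hfv
    set w : ℂ := f v with hw
    have hns : 0 < Complex.normSq w := Complex.normSq_pos.2 hfv
    set cc : ℂ := ((u + 1) / Complex.normSq w : ℝ) * (starRingEnd ℂ) w with hcc
    have hmem : cc • v ∈ V₀ := V₀.smul_mem cc hv
    have := hfu _ hmem
    rw [f.map_smul, smul_eq_mul, ← hw] at this
    have hre : (cc * w).re = u + 1 := by
      rw [hcc, mul_assoc, ← Complex.normSq_eq_conj_mul_self, ← Complex.ofReal_mul,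
        Complex.ofReal_re, div_mul_cancel₀ _ (ne_of_gt hns)]
    rw [hre] at this
    linarith
  -- the functional composed with γ
  have hu0 : 0 < u := by
    have := hfu 0 V₀.zero_mem
    simpa using this
  obtain ⟨x₀, hx₀⟩ := hU
  obtain ⟨ε₁, hε₁, hbU⟩ := Metric.isOpen_iff.1 hUo x₀ hx₀
  obtain ⟨ε₂, hε₂, hbX⟩ := Metric.isOpen_iff.1 hXo (RtoC x₀) (hUX x₀ hx₀)
  set r : ℝ := min ε₁ ε₂ with hrdef
  have hr : 0 < r := lt_min hε₁ hε₂
  have hzero : ∀ y, dist y x₀ < r → (fun z => f (γ z)) (RtoC y) = 0 := by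
    intro y hy
    have hyU : y ∈ U := hbU (by simp only [Metric.mem_ball]; exact lt_of_lt_of_le hy (min_le_left _ _))
    exact hf0 _ (hγU y hyU)
  have hEq := eq_zero_of_real_zero hXo hXc.isPreconnected (hγ f) x₀ hr
    (fun w hw => hbX (Metric.mem_ball.2
      (lt_of_lt_of_le (Metric.mem_ball.1 hw) (min_le_right _ _)))) hzero
  have := hEq hz
  simp only [Pi.zero_apply] at this
  rw [this] at hux
  simp at hux
  linarith

end Paper
end
end

section
/- Let H_n denote the n-th physicists' Hermite polynomial. Then for every a ∈ ℝ and every n ∈ ℕ, ∫_ℝ H_n(x+a)² e^{−x²} dx ≤ 8ⁿ e^{2a²} ∫_ℝ H_n(x)² e^{−x²} dx. -/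
open MeasureTheory Polynomial
open scoped Real

noncomputable section

namespace Paper

/-- The physicists' Hermite polynomials, via the recurrence
`H₀ = 1`, `H_{n+1}(x) = 2x Hₙ(x) − Hₙ'(x)`
(equivalent to `Hₙ(x) = (−1)ⁿ e^{x²} (dⁿ/dxⁿ) e^{−x²}`). -/
def hermiteP : ℕ → Polynomial ℝ
  | 0 => 1
  | n + 1 => Polynomial.C 2 * Polynomial.X * hermiteP n - Polynomial.derivative (hermiteP n)

lemma hermiteP_zero : hermiteP 0 = 1 := rfl

lemma hermiteP_succ (n : ℕ) :
    hermiteP (n + 1) = C 2 * X * hermiteP n - derivative (hermiteP n) := rfl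

lemma hermiteP_derivative (n : ℕ) :
    derivative (hermiteP (n + 1)) = C (2 * (n + 1) : ℝ) * hermiteP n := by
  induction n with
  | zero =>
    apply Polynomial.funext; intro x
    simp [hermiteP_succ, hermiteP_zero]
  | succ n ih =>
    have h2 : derivative (derivative (hermiteP (n+1))) = C (2*(n+1) : ℝ) * derivative (hermiteP n) := by
      rw [ih, derivative_mul, derivative_C]; simp
    apply Polynomial.funext; intro x
    rw [hermiteP_succ (n+1), derivative_sub, derivative_mul, derivative_mul, h2, ih,
      hermiteP_succ n]
    simp only [eval_mul, eval_sub, eval_add, eval_C, eval_X, derivative_X, derivative_C, eval_one, eval_zero]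
    push_cast
    ring


lemma pascal_c (a : ℝ) (n k : ℕ) (hk : k ≤ n) :
    (((n+1).choose (k+1) : ℝ)) * (2*a)^(n+1-(k+1)) =
      (n.choose k : ℝ) * (2*a)^(n-k) + 2*a*((n.choose (k+1) : ℝ)*(2*a)^(n-(k+1))) := by
  rcases eq_or_lt_of_le hk with h | h
  · subst h
    simp [Nat.choose_succ_self]
  · have h1 : n + 1 - (k+1) = n - k := by omega
    have h2 : n - k = (n - (k+1)) + 1 := by omega
    rw [h1, Nat.choose_succ_succ, h2, pow_succ]
    push_cast
    ring

lemma hermiteP_comp (a : ℝ) (n : ℕ) :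
    (hermiteP n).comp (X + C a) =
      ∑ k ∈ Finset.range (n+1), C ((n.choose k : ℝ) * (2*a)^(n-k)) * hermiteP k := by
  induction n with
  | zero => simp [hermiteP_zero]
  | succ n ih =>
    have hder : derivative ((hermiteP n).comp (X + C a))
        = (derivative (hermiteP n)).comp (X + C a) := by
      rw [derivative_comp]; simp
    have key : (hermiteP (n+1)).comp (X + C a)
        = (C 2 * X * ((hermiteP n).comp (X + C a))
            - derivative ((hermiteP n).comp (X + C a)))
          + C (2*a) * ((hermiteP n).comp (X + C a)) := by
      rw [hermiteP_succ n, sub_comp, mul_comp, mul_comp, C_comp, X_comp, hder]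
      have : (C (2*a) : ℝ[X]) = C 2 * C a := by rw [← C_mul]
      rw [this]
      ring
    rw [key, ih]
    have h1 : C 2 * X * (∑ k ∈ Finset.range (n+1), C ((n.choose k : ℝ) * (2*a)^(n-k)) * hermiteP k)
        - derivative (∑ k ∈ Finset.range (n+1), C ((n.choose k : ℝ) * (2*a)^(n-k)) * hermiteP k)
        = ∑ k ∈ Finset.range (n+1), C ((n.choose k : ℝ) * (2*a)^(n-k)) * hermiteP (k+1) := by
      rw [derivative_sum, Finset.mul_sum, ← Finset.sum_sub_distrib]
      refine Finset.sum_congr rfl fun k _ => ?_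
      rw [derivative_mul, derivative_C, hermiteP_succ k]
      ring
    have h2 : C (2*a) * (∑ k ∈ Finset.range (n+1), C ((n.choose k : ℝ) * (2*a)^(n-k)) * hermiteP k)
        = ∑ k ∈ Finset.range (n+2), C (2*a*((n.choose k : ℝ) * (2*a)^(n-k))) * hermiteP k := by
      conv_rhs => rw [Finset.sum_range_succ]
      rw [Finset.mul_sum]
      simp only [Nat.choose_succ_self, Nat.cast_zero, zero_mul, mul_zero, map_zero, add_zero]
      refine Finset.sum_congr rfl fun k _ => ?_
      rw [← mul_assoc, ← C_mul]
    rw [h1, h2, Finset.sum_range_succ' (fun k => C (2*a*((n.choose k : ℝ) * (2*a)^(n-k))) * hermiteP k) (n+1),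
      Finset.sum_range_succ' (fun k => C (((n+1).choose k : ℝ) * (2*a)^(n+1-k)) * hermiteP k) (n+1)]
    rw [← add_assoc, ← Finset.sum_add_distrib]
    congr 1
    · refine Finset.sum_congr rfl fun k hk => ?_
      rw [pascal_c a n k (by simpa using Nat.lt_succ_iff.mp (Finset.mem_range.mp hk)), C_add]
      ring
    · congr 1
      simp [pow_succ]
      ring
  
lemma integrable_poly_gauss (p : ℝ[X]) :
    Integrable (fun x : ℝ => p.eval x * Real.exp (-x^2)) := by
  induction p using Polynomial.induction_on' with
  | add p q hp hq => simpa [add_mul] using hp.fun_add hq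
  | monomial k c =>
    have h : Integrable (fun x : ℝ => x ^ k * Real.exp (-x^2)) := by
      have := integrable_rpow_mul_exp_neg_mul_sq (b := 1) one_pos
        (s := (k : ℝ)) (neg_one_lt_zero.trans_le (Nat.cast_nonneg k))
      simpa [Real.rpow_natCast] using this
    simpa [eval_monomial, mul_assoc] using h.const_mul c

lemma hasDerivAt_poly_gauss (r : ℝ[X]) (x : ℝ) :
    HasDerivAt (fun y : ℝ => r.eval y * Real.exp (-y^2))
      ((derivative r).eval x * Real.exp (-x^2) - 2 * x * (r.eval x * Real.exp (-x^2))) x := by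
  have h1 : HasDerivAt (fun y : ℝ => r.eval y) ((derivative r).eval x) x := r.hasDerivAt x
  have hx : HasDerivAt (fun y : ℝ => -y^2) (-(2*x)) x := by
    simpa using (hasDerivAt_pow 2 x).fun_neg
  have h2 : HasDerivAt (fun y : ℝ => Real.exp (-y^2)) (Real.exp (-x^2) * (-(2*x))) x :=
    hx.exp
  have := h1.fun_mul h2
  refine this.congr_deriv ?_
  ring

lemma ibp (p : ℝ[X]) (n : ℕ) :
    ∫ x : ℝ, (p * hermiteP (n+1)).eval x * Real.exp (-x^2)
      = ∫ x : ℝ, (derivative p * hermiteP n).eval x * Real.exp (-x^2) := by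
  have hd : ∀ x : ℝ, HasDerivAt (fun y : ℝ => (p * hermiteP n).eval y * Real.exp (-y^2))
      ((derivative p * hermiteP n).eval x * Real.exp (-x^2)
        - (p * hermiteP (n+1)).eval x * Real.exp (-x^2)) x := by
    intro x
    have h := hasDerivAt_poly_gauss (p * hermiteP n) x
    convert h using 1
    rw [derivative_mul]
    simp only [hermiteP_succ n, eval_mul, eval_sub, eval_add, eval_C, eval_X]
    ring
  have h0 := integral_eq_zero_of_hasDerivAt_of_integrable hd
    ((integrable_poly_gauss _).sub (integrable_poly_gauss _)) (integrable_poly_gauss _)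
  rw [integral_sub (integrable_poly_gauss _) (integrable_poly_gauss _)] at h0
  linarith

lemma norm_rec (n : ℕ) :
    ∫ x : ℝ, ((hermiteP (n+1)).eval x)^2 * Real.exp (-x^2)
      = (2*(n+1) : ℝ) * ∫ x : ℝ, ((hermiteP n).eval x)^2 * Real.exp (-x^2) := by
  have h := ibp (hermiteP (n+1)) n
  rw [hermiteP_derivative n] at h
  simp only [eval_mul, eval_C] at h
  rw [← MeasureTheory.integral_const_mul]
  have e1 : ∀ x : ℝ, eval x (hermiteP (n+1)) ^ 2 * Real.exp (-x^2)
      = eval x (hermiteP (n+1)) * eval x (hermiteP (n+1)) * Real.exp (-x^2) := by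
    intro x; ring
  simp only [e1]
  rw [h]
  congr 1 with x
  push_cast
  ring

lemma norm_eq (n : ℕ) :
    ∫ x : ℝ, ((hermiteP n).eval x)^2 * Real.exp (-x^2)
      = (2^n * n.factorial : ℝ) * ∫ x : ℝ, Real.exp (-x^2) := by
  induction n with
  | zero => simp [hermiteP_zero]
  | succ n ih =>
    rw [norm_rec, ih, Nat.factorial_succ]
    push_cast
    ring

lemma term_bound (a : ℝ) (n k : ℕ) (hk : k ≤ n) :
    ((n.choose k : ℝ) * (2*a)^(n-k))^2 * (2^k * k.factorial) ≤
      2^n * n.factorial * (2^n * ((2*a^2)^(n-k) / (n-k).factorial)) := by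
  have h1 : ((n.choose k : ℝ)) * k.factorial * (n-k).factorial = n.factorial := by
    exact_mod_cast Nat.choose_mul_factorial_mul_factorial hk
  have h2 : ((n.choose k : ℝ)) ≤ 2^n := by
    have : n.choose k ≤ 2^n := by
      rw [← Nat.sum_range_choose n]
      exact Finset.single_le_sum (fun i _ => Nat.zero_le _)
        (Finset.mem_range.mpr (Nat.lt_succ_of_le hk))
    exact_mod_cast this
  set t := n - k with ht
  have e1 : ((2*a)^t)^2 = 2^t * (2*a^2)^t := by
    rw [← pow_mul, mul_comm t 2, pow_mul]
    rw [show ((2*a)^2 : ℝ) = 2*(2*a^2) by ring, mul_pow]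
  have e2 : (2:ℝ)^t * 2^k = 2^n := by
    rw [← pow_add]; congr 1; omega
  have tfpos : (0:ℝ) < (t.factorial : ℝ) := by exact_mod_cast t.factorial_pos
  have key : (2:ℝ)^n * n.factorial * (2^n * ((2*a^2)^t / t.factorial))
      = 2^n * 2^n * ((n.choose k : ℝ) * k.factorial * (2*a^2)^t) := by
    rw [← h1]; field_simp
  have lhs_eq : ((n.choose k : ℝ) * (2*a)^t)^2 * (2^k * k.factorial)
      = (n.choose k : ℝ) * 2^n * ((n.choose k : ℝ) * k.factorial * (2*a^2)^t) := by
    rw [mul_pow, e1, ← e2]; ring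
  rw [key, lhs_eq]
  have hM : (0:ℝ) ≤ (n.choose k : ℝ) * k.factorial * (2*a^2)^t := by positivity
  have : (0:ℝ) ≤ (2:ℝ)^n := by positivity
  nlinarith [mul_le_mul_of_nonneg_right (mul_le_mul_of_nonneg_right h2 this) hM]

lemma sum_bound (a : ℝ) (n : ℕ) :
    ∑ k ∈ Finset.range (n+1), ((n.choose k : ℝ) * (2*a)^(n-k))^2 * (2^k * k.factorial)
      ≤ 2^n * n.factorial * (2^n * Real.exp (2*a^2)) := by
  calc ∑ k ∈ Finset.range (n+1), ((n.choose k : ℝ) * (2*a)^(n-k))^2 * (2^k * k.factorial)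
      ≤ ∑ k ∈ Finset.range (n+1),
          (2:ℝ)^n * n.factorial * (2^n * ((2*a^2)^(n-k) / (n-k).factorial)) :=
        Finset.sum_le_sum fun k hk =>
          term_bound a n k (Nat.lt_succ_iff.mp (Finset.mem_range.mp hk))
    _ = 2^n * n.factorial * (2^n * ∑ k ∈ Finset.range (n+1), (2*a^2)^(n-k) / (n-k).factorial) := by
        rw [Finset.mul_sum, Finset.mul_sum]
    _ ≤ 2^n * n.factorial * (2^n * Real.exp (2*a^2)) := by
        have hre : ∑ k ∈ Finset.range (n+1), (2*a^2)^(n-k) / ((n-k).factorial : ℝ)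
            = ∑ t ∈ Finset.range (n+1), (2*a^2)^t / (t.factorial : ℝ) := by
          have h := Finset.sum_range_reflect (fun t => (2*a^2)^t / (t.factorial : ℝ)) (n+1)
          simpa using h
        rw [hre]
        gcongr
        exact Real.sum_le_exp_of_nonneg (by positivity) (n+1)

/-- `∫ Hₙ(x+a)² e^{−x²} dx ≤ 8ⁿ e^{2a²} ∫ Hₙ(x)² e^{−x²} dx`. -/
theorem statement15 (a : ℝ) (n : ℕ) :
    ∫ x : ℝ, ((hermiteP n).eval (x + a)) ^ 2 * Real.exp (-x ^ 2) ≤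
      8 ^ n * Real.exp (2 * a ^ 2) *
        ∫ x : ℝ, ((hermiteP n).eval x) ^ 2 * Real.exp (-x ^ 2) := by
  have I_nonneg : (0:ℝ) ≤ ∫ x : ℝ, Real.exp (-x^2) :=
    integral_nonneg fun x => (Real.exp_pos _).le
  set I := ∫ x : ℝ, Real.exp (-x^2) with hI
  have hpt : ∀ x : ℝ, ((hermiteP n).eval (x+a))^2 * Real.exp (-x^2)
      ≤ (n+1 : ℝ) * ∑ k ∈ Finset.range (n+1),
          ((n.choose k : ℝ) * (2*a)^(n-k))^2 * (((hermiteP k).eval x)^2 * Real.exp (-x^2)) := by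
    intro x
    have he : (hermiteP n).eval (x+a)
        = ∑ k ∈ Finset.range (n+1), ((n.choose k : ℝ) * (2*a)^(n-k)) * (hermiteP k).eval x := by
      have h := congrArg (eval x) (hermiteP_comp a n)
      simpa [eval_comp, eval_finset_sum] using h
    rw [he]
    have hcs := sq_sum_le_card_mul_sum_sq (s := Finset.range (n+1))
      (f := fun k => ((n.choose k : ℝ) * (2*a)^(n-k)) * (hermiteP k).eval x)
    simp only [Finset.card_range] at hcs
    calc (∑ k ∈ Finset.range (n+1),
            ((n.choose k : ℝ) * (2*a)^(n-k)) * (hermiteP k).eval x)^2 * Real.exp (-x^2)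
        ≤ ((n+1 : ℝ) * ∑ k ∈ Finset.range (n+1),
            (((n.choose k : ℝ) * (2*a)^(n-k)) * (hermiteP k).eval x)^2) * Real.exp (-x^2) := by
          apply mul_le_mul_of_nonneg_right _ (Real.exp_pos _).le
          exact_mod_cast hcs
      _ = (n+1 : ℝ) * ∑ k ∈ Finset.range (n+1),
            ((n.choose k : ℝ) * (2*a)^(n-k))^2 * (((hermiteP k).eval x)^2 * Real.exp (-x^2)) := by
          rw [mul_assoc, Finset.sum_mul]
          congr 1
          refine Finset.sum_congr rfl fun k _ => ?_
          ring
  have hL : Integrable (fun x : ℝ => ((hermiteP n).eval (x+a))^2 * Real.exp (-x^2)) := by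
    have h := integrable_poly_gauss (((hermiteP n).comp (X + C a))^2)
    simpa [eval_pow, eval_comp] using h
  have hRk : ∀ k : ℕ, Integrable (fun x : ℝ => ((n.choose k : ℝ) * (2*a)^(n-k))^2 *
      (((hermiteP k).eval x)^2 * Real.exp (-x^2))) := by
    intro k
    have h := integrable_poly_gauss ((hermiteP k)^2)
    simp only [eval_pow] at h
    exact h.const_mul _
  have hR : Integrable (fun x : ℝ => (n+1 : ℝ) * ∑ k ∈ Finset.range (n+1),
      ((n.choose k : ℝ) * (2*a)^(n-k))^2 * (((hermiteP k).eval x)^2 * Real.exp (-x^2))) :=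
    (integrable_finset_sum _ (fun k _ => hRk k)).const_mul _
  have step1 := integral_mono hL hR hpt
  have step2 : (∫ x : ℝ, (n+1 : ℝ) * ∑ k ∈ Finset.range (n+1),
      ((n.choose k : ℝ) * (2*a)^(n-k))^2 * (((hermiteP k).eval x)^2 * Real.exp (-x^2)))
      = (n+1 : ℝ) * ∑ k ∈ Finset.range (n+1),
          ((n.choose k : ℝ) * (2*a)^(n-k))^2 * (2^k * k.factorial * I) := by
    rw [MeasureTheory.integral_const_mul, MeasureTheory.integral_finset_sum _ (fun k _ => hRk k)]
    congr 1
    refine Finset.sum_congr rfl fun k _ => ?_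
    rw [MeasureTheory.integral_const_mul, norm_eq k]
  have sumI : ∑ k ∈ Finset.range (n+1),
      ((n.choose k : ℝ) * (2*a)^(n-k))^2 * (2^k * k.factorial * I)
      = (∑ k ∈ Finset.range (n+1),
          ((n.choose k : ℝ) * (2*a)^(n-k))^2 * (2^k * k.factorial)) * I := by
    rw [Finset.sum_mul]
    exact Finset.sum_congr rfl fun k _ => by ring
  have hsb := sum_bound a n
  have hn1 : (n+1 : ℝ) ≤ 4^n := by
    have h2 : n + 1 ≤ 2^n := Nat.lt_two_pow_self
    have h4 : (2:ℕ)^n ≤ 4^n := Nat.pow_le_pow_left (by norm_num) n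
    exact_mod_cast h2.trans h4
  have final : (n+1:ℝ) * (2^n * n.factorial * (2^n * Real.exp (2*a^2)) * I)
      ≤ 8^n * Real.exp (2*a^2) * (2^n * n.factorial * I) := by
    have h8 : (8:ℝ)^n = 4^n * 2^n := by rw [← mul_pow]; norm_num
    rw [h8]
    have e0 : (0:ℝ) ≤ 2^n * (n.factorial:ℝ) * Real.exp (2*a^2) * I * 2^n := by positivity
    nlinarith [mul_le_mul_of_nonneg_right hn1 e0]
  calc ∫ x : ℝ, ((hermiteP n).eval (x + a)) ^ 2 * Real.exp (-x ^ 2)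
      ≤ ∫ x : ℝ, (n+1 : ℝ) * ∑ k ∈ Finset.range (n+1),
          ((n.choose k : ℝ) * (2*a)^(n-k))^2 * (((hermiteP k).eval x)^2 * Real.exp (-x^2)) := step1
    _ = (n+1 : ℝ) * ((∑ k ∈ Finset.range (n+1),
          ((n.choose k : ℝ) * (2*a)^(n-k))^2 * (2^k * k.factorial)) * I) := by
        rw [step2, sumI]
    _ ≤ (n+1 : ℝ) * (2^n * n.factorial * (2^n * Real.exp (2*a^2)) * I) := by
        refine mul_le_mul_of_nonneg_left (mul_le_mul_of_nonneg_right hsb I_nonneg) (by positivity)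
    _ ≤ 8^n * Real.exp (2*a^2) * (2^n * n.factorial * I) := final
    _ = 8 ^ n * Real.exp (2 * a ^ 2) * ∫ x : ℝ, ((hermiteP n).eval x) ^ 2 * Real.exp (-x ^ 2) := by
        rw [norm_eq n]

end Paper
end
end
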